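/- arXiv:2511.21603 — 10 statements merged into one kernel-verified Lean document; each statement's English description precedes it below -/
import Mathlib

section
/- Let H and H' be real Hilbert spaces, let A : H → H' be a bounded linear operator, and let λ > 0. Then the operator A*A + λI on H is boundedly invertible, and both ‖A(A*A + λI)⁻¹‖ ≤ 1/(2√λ) and ‖(A*A + λI)⁻¹A*‖ ≤ 1/(2√λ), where ‖·‖ is the operator norm. -/
open ContinuousLinearMap
open scoped RealInnerProductSpace

/-- **Polar decomposition bound.**
Let `H, H'` be real Hilbert spaces, `A : H → H'` a bounded linear operator and `λ > 0`.
Then `A*A + λI` is boundedly invertible, `‖A (A*A + λI)⁻¹‖ ≤ 1/(2√λ)` and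
`‖(A*A + λI)⁻¹ A*‖ ≤ 1/(2√λ)`. -/
theorem polar_decomposition_bound
    {H H' : Type*} [NormedAddCommGroup H] [InnerProductSpace ℝ H] [CompleteSpace H]
    [NormedAddCommGroup H'] [InnerProductSpace ℝ H'] [CompleteSpace H']
    (A : H →L[ℝ] H') (lam : ℝ) (hlam : 0 < lam) :
    IsUnit (ContinuousLinearMap.adjoint A ∘L A + lam • (1 : H →L[ℝ] H)) ∧
    ‖A ∘L Ring.inverse (ContinuousLinearMap.adjoint A ∘L A + lam • (1 : H →L[ℝ] H))‖
      ≤ 1 / (2 * Real.sqrt lam) ∧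
    ‖Ring.inverse (ContinuousLinearMap.adjoint A ∘L A + lam • (1 : H →L[ℝ] H)) ∘L
        ContinuousLinearMap.adjoint A‖ ≤ 1 / (2 * Real.sqrt lam) := by
  set T : H →L[ℝ] H := ContinuousLinearMap.adjoint A ∘L A + lam • (1 : H →L[ℝ] H) with hT
  have hsqrt : (0:ℝ) < Real.sqrt lam := Real.sqrt_pos.mpr hlam
  have hinner : ∀ x : H, ⟪T x, x⟫ = ‖A x‖ ^ 2 + lam * ‖x‖ ^ 2 := by
    intro x
    simp only [hT, add_apply, comp_apply, smul_apply, ContinuousLinearMap.one_apply, inner_add_left,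
      inner_smul_left, adjoint_inner_left]
    rw [real_inner_self_eq_norm_sq, real_inner_self_eq_norm_sq, starRingEnd_apply, star_trivial]
  -- invertibility
  have hunit : IsUnit T := by
    apply isUnit_of_forall_le_norm_inner_map T (c := lam.toNNReal)
      (by simpa using hlam)
    intro x
    rw [hinner x, Real.norm_eq_abs]
    have h1 : (0:ℝ) ≤ ‖A x‖ ^ 2 + lam * ‖x‖ ^ 2 := by positivity
    rw [abs_of_nonneg h1, Real.coe_toNNReal _ hlam.le]
    nlinarith [sq_nonneg ‖A x‖]
  -- self-adjointness of T
  have hTsa : IsSelfAdjoint T := by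
    rw [IsSelfAdjoint, star_eq_adjoint, hT]
    rw [map_add]
    congr 1
    · rw [adjoint_comp, adjoint_adjoint]
    · rw [map_smulₛₗ, starRingEnd_apply, star_trivial]
      congr 1
      rw [show (1 : H →L[ℝ] H) = ContinuousLinearMap.id ℝ H from rfl, adjoint_id]
  set B : H →L[ℝ] H := Ring.inverse T with hB
  have hTB : T ∘L B = 1 := by
    rw [← ContinuousLinearMap.mul_def, hB, Ring.mul_inverse_cancel _ hunit]
  have hBT : B ∘L T = 1 := by
    rw [← ContinuousLinearMap.mul_def, hB, Ring.inverse_mul_cancel _ hunit]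
  -- key pointwise estimate
  have hkey : ∀ y : H, 2 * Real.sqrt lam * ‖A y‖ ≤ ‖T y‖ := by
    intro y
    have hsq : (2 * Real.sqrt lam * ‖A y‖) ^ 2 ≤ ‖T y‖ ^ 2 := by
      have hTy : T y = ContinuousLinearMap.adjoint A (A y) + lam • y := by
        simp [hT, add_apply, comp_apply, smul_apply, one_apply]
      rw [hTy, norm_add_sq_real]
      have hinner2 : ⟪ContinuousLinearMap.adjoint A (A y), lam • y⟫ = lam * ‖A y‖ ^ 2 := by
        rw [real_inner_smul_right, adjoint_inner_left, real_inner_self_eq_norm_sq]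
      have hcs : ‖A y‖ ^ 2 ≤ ‖ContinuousLinearMap.adjoint A (A y)‖ * ‖y‖ := by
        calc ‖A y‖ ^ 2 = ⟪ContinuousLinearMap.adjoint A (A y), y⟫ := by
              rw [adjoint_inner_left, real_inner_self_eq_norm_sq]
          _ ≤ ‖ContinuousLinearMap.adjoint A (A y)‖ * ‖y‖ := real_inner_le_norm _ _
      rw [hinner2, norm_smul, Real.norm_eq_abs, abs_of_pos hlam]
      have hs2 : Real.sqrt lam ^ 2 = lam := Real.sq_sqrt hlam.le
      nlinarith [sq_nonneg (‖ContinuousLinearMap.adjoint A (A y)‖ - lam * ‖y‖),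
        norm_nonneg (ContinuousLinearMap.adjoint A (A y)), norm_nonneg y,
        norm_nonneg (A y)]
    have h1 : (0:ℝ) ≤ 2 * Real.sqrt lam * ‖A y‖ := by positivity
    nlinarith [hsq, h1, norm_nonneg (T y)]
  -- first norm bound
  have hbound1 : ‖A ∘L B‖ ≤ 1 / (2 * Real.sqrt lam) := by
    apply opNorm_le_bound _ (by positivity)
    intro x
    have hTBx : T (B x) = x := by
      have := congrArg (fun f : H →L[ℝ] H => f x) hTB
      simpa using this
    have := hkey (B x)
    rw [hTBx] at this
    rw [comp_apply, div_mul_eq_mul_div, le_div_iff₀ (by positivity), one_mul]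
    linarith
  -- second norm bound via adjoint
  have hBsa : IsSelfAdjoint B := by
    rw [IsSelfAdjoint, hB, ← Ring.inverse_star, hTsa.star_eq]
  have hadj : B ∘L ContinuousLinearMap.adjoint A = ContinuousLinearMap.adjoint (A ∘L B) := by
    rw [adjoint_comp]
    congr 1
    exact (star_eq_adjoint B ▸ hBsa.star_eq).symm
  refine ⟨hunit, hbound1, ?_⟩
  rw [hadj]
  calc ‖ContinuousLinearMap.adjoint (A ∘L B)‖ = ‖A ∘L B‖ :=
        LinearIsometryEquiv.norm_map ContinuousLinearMap.adjoint _
    _ ≤ 1 / (2 * Real.sqrt lam) := hbound1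
end

section
/- Let H be a real Hilbert space, let A, B : H → H be bounded linear operators, let Σ̄_A, Σ̲_B, Σ̄_B be bounded self-adjoint operators on H, and let C > 0. Suppose (1) AA* ⪯ Σ̄_A; (2) Σ̲_B ⪯ BB* ⪯ Σ̄_B ⪯ C·Σ̲_B; and (3) Σ̄_A ⪯ (1/(8C²))·Σ̄_B, all in the Loewner order. Then (A + B)(A + B)* ⪰ (1/(4C))·Σ̄_B. -/
open ContinuousLinearMap RealInnerProductSpace

/-- **Young's inequality for operators.**
Let `H` be a real Hilbert space, `A, B : H → H` bounded linear operators,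
`SigA = Σ̄_A`, `SigBlow = Σ̲_B`, `SigBbar = Σ̄_B` bounded self-adjoint operators
on `H`, and `C > 0`.  Suppose (1) `AA* ⪯ Σ̄_A`; (2) `Σ̲_B ⪯ BB* ⪯ Σ̄_B ⪯ C·Σ̲_B`;
and (3) `Σ̄_A ⪯ (1/(8C²))·Σ̄_B` in the Loewner order.
Then `(A + B)(A + B)* ⪰ (1/(4C))·Σ̄_B`. -/
theorem young_operator_lower_bound
    {H : Type*} [NormedAddCommGroup H] [InnerProductSpace ℝ H] [CompleteSpace H]
    (A B SigA SigBlow SigBbar : H →L[ℝ] H) (C : ℝ) (hC : 0 < C)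
    (hSigA : IsSelfAdjoint SigA) (hSigBlow : IsSelfAdjoint SigBlow)
    (hSigBbar : IsSelfAdjoint SigBbar)
    (h1 : (SigA - A ∘L ContinuousLinearMap.adjoint A).IsPositive)
    (h2a : ((B ∘L ContinuousLinearMap.adjoint B) - SigBlow).IsPositive)
    (h2b : (SigBbar - B ∘L ContinuousLinearMap.adjoint B).IsPositive)
    (h2c : (C • SigBlow - SigBbar).IsPositive)
    (h3 : ((1 / (8 * C ^ 2)) • SigBbar - SigA).IsPositive) :
    ((A + B) ∘L ContinuousLinearMap.adjoint (A + B) - (1 / (4 * C)) • SigBbar).IsPositive := by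
  constructor
  · have hAB : IsSelfAdjoint ((A + B) ∘L ContinuousLinearMap.adjoint (A + B)) := by
      rw [isSelfAdjoint_iff']
      rw [adjoint_comp, adjoint_adjoint]
    have hsm : IsSelfAdjoint ((1 / (4 * C)) • SigBbar) := by
      rw [isSelfAdjoint_iff'] at hSigBbar ⊢
      rw [map_smulₛₗ, hSigBbar]
      simp
    exact (hAB.sub hsm).isSymmetric
  · intro x
    -- notation for the relevant scalar quantities
    set v := ContinuousLinearMap.adjoint A x with hv
    set w := ContinuousLinearMap.adjoint B x with hw
    have hAAs : ⟪(A ∘L ContinuousLinearMap.adjoint A) x, x⟫ = ‖v‖ ^ 2 := by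
      rw [ContinuousLinearMap.comp_apply, ← adjoint_inner_right,
        ← hv, real_inner_self_eq_norm_sq]
    have hBBs : ⟪(B ∘L ContinuousLinearMap.adjoint B) x, x⟫ = ‖w‖ ^ 2 := by
      rw [ContinuousLinearMap.comp_apply, ← adjoint_inner_right,
        ← hw, real_inner_self_eq_norm_sq]
    set sA := ⟪SigA x, x⟫ with hsA
    set sl := ⟪SigBlow x, x⟫ with hsl
    set sb := ⟪SigBbar x, x⟫ with hsb
    have e1 : ‖v‖ ^ 2 ≤ sA := by
      have := h1.inner_nonneg_left x
      simp only [reApplyInnerSelf, RCLike.re_to_real, ContinuousLinearMap.sub_apply,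
        inner_sub_left, hAAs] at this
      linarith
    have e2a : sl ≤ ‖w‖ ^ 2 := by
      have := h2a.inner_nonneg_left x
      simp only [reApplyInnerSelf, RCLike.re_to_real, ContinuousLinearMap.sub_apply,
        inner_sub_left, hBBs] at this
      linarith
    have e2b : ‖w‖ ^ 2 ≤ sb := by
      have := h2b.inner_nonneg_left x
      simp only [reApplyInnerSelf, RCLike.re_to_real, ContinuousLinearMap.sub_apply,
        inner_sub_left, hBBs] at this
      linarith
    have e2c : sb ≤ C * sl := by
      have := h2c.inner_nonneg_left x
      simp only [reApplyInnerSelf, RCLike.re_to_real, ContinuousLinearMap.sub_apply,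
        inner_sub_left, ContinuousLinearMap.smul_apply, inner_smul_left,
        RCLike.star_def, starRingEnd_apply, star_trivial] at this
      linarith
    have e3 : sA ≤ (1 / (8 * C ^ 2)) * sb := by
      have := h3.inner_nonneg_left x
      simp only [reApplyInnerSelf, RCLike.re_to_real, ContinuousLinearMap.sub_apply,
        inner_sub_left, ContinuousLinearMap.smul_apply, inner_smul_left,
        RCLike.star_def, starRingEnd_apply, star_trivial] at this
      linarith
    -- the goal reduces to a scalar inequality
    have hgoal : ((A + B) ∘L ContinuousLinearMap.adjoint (A + B) -
        (1 / (4 * C)) • SigBbar).reApplyInnerSelf x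
        = ‖v + w‖ ^ 2 - (1 / (4 * C)) * sb := by
      simp only [reApplyInnerSelf, RCLike.re_to_real, ContinuousLinearMap.sub_apply,
        inner_sub_left, ContinuousLinearMap.smul_apply, inner_smul_left,
        RCLike.star_def, starRingEnd_apply, star_trivial]
      congr 1
      rw [ContinuousLinearMap.comp_apply, ← adjoint_inner_right]
      have : ContinuousLinearMap.adjoint (A + B) x = v + w := by
        rw [map_add]; rfl
      rw [this, real_inner_self_eq_norm_sq]
    rw [hgoal]
    -- key elementary estimate : ‖v+w‖² ≥ ‖w‖²/2 - ‖v‖²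
    have hkey : ‖w‖ ^ 2 / 2 - ‖v‖ ^ 2 ≤ ‖v + w‖ ^ 2 := by
      have h := norm_add_le (v + w) (-v)
      have h2 : v + w + -v = w := by abel
      rw [h2, norm_neg] at h
      nlinarith [sq_nonneg (‖v + w‖ - ‖v‖), norm_nonneg (v + w), norm_nonneg v,
        norm_nonneg w]
    have hb0 : (0:ℝ) ≤ ‖w‖ ^ 2 := sq_nonneg _
    have hq0 : (0:ℝ) ≤ ‖v + w‖ ^ 2 := sq_nonneg _
    have hsb0 : (0:ℝ) ≤ sb := le_trans hb0 e2b
    have h8 : (0:ℝ) < 8 * C ^ 2 := by positivity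
    have e3' : 8 * C ^ 2 * sA ≤ sb := by
      rw [one_div, inv_mul_eq_div, le_div_iff₀ h8] at e3
      linarith
    have h4 : (0:ℝ) < 4 * C := by positivity
    rw [sub_nonneg, one_div, inv_mul_eq_div, div_le_iff₀ h4]
    -- now a scalar inequality : sb / (4C) ≤ ‖v+w‖²
    have p1 : 8 * C ^ 2 * (‖w‖ ^ 2 / 2 - ‖v‖ ^ 2) ≤ 8 * C ^ 2 * ‖v + w‖ ^ 2 :=
      mul_le_mul_of_nonneg_left hkey h8.le
    have p2 : 4 * C ^ 2 * sl ≤ 4 * C ^ 2 * ‖w‖ ^ 2 :=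
      mul_le_mul_of_nonneg_left e2a (by positivity)
    have p3 : 8 * C ^ 2 * ‖v‖ ^ 2 ≤ 8 * C ^ 2 * sA :=
      mul_le_mul_of_nonneg_left e1 h8.le
    have p4 : 4 * C * sb ≤ 4 * C * (C * sl) :=
      mul_le_mul_of_nonneg_left e2c h4.le
    -- combine : 8C² q ≥ 4C² sl - sb ≥ 4C sb - sb ≥ 2C sb when 2C ≥ 1
    rcases le_or_gt (1/2 : ℝ) C with hC2 | hC2
    · have h1' : 0 ≤ (2 * C - 1) * sb := mul_nonneg (by linarith) hsb0
      have key : 2 * C * sb ≤ 8 * C ^ 2 * ‖v + w‖ ^ 2 := by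
        ring_nf at p1 p2 p3 p4 h1' ⊢
        linarith
      have heq : 8 * C ^ 2 * ‖v + w‖ ^ 2 = 2 * C * (‖v + w‖ ^ 2 * (4 * C)) := by
        ring
      rw [heq] at key
      exact le_of_mul_le_mul_left key (by positivity)
    · -- C < 1/2 < 1 forces sb = 0
      have hcs : sl ≤ C * sl := le_trans (le_trans e2a e2b) e2c
      have hsl0 : sl ≤ 0 := by
        by_contra h
        push_neg at h
        nlinarith [mul_lt_mul_of_pos_right hC2 h]
      have hsb0' : sb ≤ 0 :=
        le_trans e2c (mul_nonpos_of_nonneg_of_nonpos hC.le hsl0)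
      have hsbz : sb = 0 := le_antisymm hsb0' hsb0
      rw [hsbz]
      exact mul_nonneg hq0 h4.le
end

section
/- Let μ > 0 and β ∈ [0,1]. Then for every t ≥ 0, μ·t^β/(t + μ) ≤ (1 − β)^{1−β} · β^β · μ^β, where real powers are taken with the convention 0⁰ = 1. -/
/-! Writing `μ t^β = μ^β · t^β μ^{1-β}`, the bound reduces to the weighted AM–GM inequality
`t^β μ^{1-β} ≤ β^β (1-β)^{1-β} (t + μ)`, i.e. AM–GM for `t/β` and `μ/(1-β)` with weights `β`
and `1-β`. -/

namespace Real

lemma mul_div_le_of_nonneg {w a : ℝ} (hw : 0 ≤ w) (ha : 0 ≤ a) : w * (a / w) ≤ a := by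
  rcases hw.eq_or_lt with rfl | hw
  · simpa using ha
  · rw [mul_div_cancel₀ a hw.ne']

lemma rpow_self_pos {x : ℝ} (hx : 0 ≤ x) : 0 < x ^ x := by
  rcases hx.eq_or_lt with rfl | hx
  · simp
  · exact rpow_pos_of_pos hx x

/-- The endpoint weights are harmless because `0 ^ 0 = 1` and `a / 0 = 0`. -/
theorem rpow_mul_rpow_le_weighted_add {w₁ w₂ a b : ℝ} (hw₁ : 0 ≤ w₁) (hw₂ : 0 ≤ w₂)
    (ha : 0 ≤ a) (hb : 0 ≤ b) (hw : w₁ + w₂ = 1) :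
    a ^ w₁ * b ^ w₂ ≤ w₁ ^ w₁ * w₂ ^ w₂ * (a + b) := by
  have hc₁ : 0 < w₁ ^ w₁ := rpow_self_pos hw₁
  have hc₂ : 0 < w₂ ^ w₂ := rpow_self_pos hw₂
  have amgm := geom_mean_le_arith_mean2_weighted hw₁ hw₂
    (div_nonneg ha hw₁) (div_nonneg hb hw₂) hw
  rw [div_rpow ha hw₁, div_rpow hb hw₂] at amgm
  calc a ^ w₁ * b ^ w₂
      = w₁ ^ w₁ * w₂ ^ w₂ * (a ^ w₁ / w₁ ^ w₁ * (b ^ w₂ / w₂ ^ w₂)) := by field_simp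
    _ ≤ w₁ ^ w₁ * w₂ ^ w₂ * (w₁ * (a / w₁) + w₂ * (b / w₂)) := by gcongr
    _ ≤ w₁ ^ w₁ * w₂ ^ w₂ * (a + b) := by
      gcongr
      exacts [mul_div_le_of_nonneg hw₁ ha, mul_div_le_of_nonneg hw₂ hb]

end Real

/-- **Scalar bound for the regularized power.**
Let `μ > 0` and `β ∈ [0,1]`. Then for every `t ≥ 0`,
`μ t^β / (t + μ) ≤ (1 − β)^{1−β} β^β μ^β`, where powers are real powers
(`Real.rpow`, with the convention `0⁰ = 1`). -/
theorem scalar_regularized_power_bound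
    (μ β : ℝ) (hμ : 0 < μ) (hβ0 : 0 ≤ β) (hβ1 : β ≤ 1) :
    ∀ t : ℝ, 0 ≤ t →
      μ * t ^ β / (t + μ) ≤ (1 - β) ^ (1 - β) * β ^ β * μ ^ β := by
  intro t ht
  have amgm := Real.rpow_mul_rpow_le_weighted_add hβ0 (sub_nonneg.2 hβ1) ht hμ.le
    (add_sub_cancel β 1)
  have hsplit : μ = μ ^ β * μ ^ (1 - β) := by
    rw [← Real.rpow_add hμ, add_sub_cancel, Real.rpow_one]
  rw [div_le_iff₀ (by positivity)]
  calc μ * t ^ β = μ ^ β * (t ^ β * μ ^ (1 - β)) := by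
        conv_lhs => rw [hsplit]
        ring
    _ ≤ μ ^ β * (β ^ β * (1 - β) ^ (1 - β) * (t + μ)) := by gcongr
    _ = (1 - β) ^ (1 - β) * β ^ β * μ ^ β * (t + μ) := by ring
end

section
/- Let H_z be a real Hilbert space, let S_z be a bounded positive self-adjoint operator on H_z, let μ > 0 and β ∈ [0,1], and let S_z^β denote the β-th power of S_z given by the continuous functional calculus (with the convention t⁰ = 1 for all t ≥ 0). Then S_z + μI is boundedly invertible and ‖μ · S_z^β · (S_z + μI)⁻¹‖ ≤ (1 − β)^{1−β} · β^β · μ^β, where ‖·‖ is the operator norm and 0⁰ = 1. -/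
open ContinuousLinearMap


set_option maxHeartbeats 1000000
set_option synthInstance.maxHeartbeats 1000000

open ContinuousLinearMap Polynomial Finset

section Scalar


lemma young_bound {μ β : ℝ} (hμ : 0 < μ) (hβ0 : 0 ≤ β) (hβ1 : β ≤ 1) {t : ℝ} (ht : 0 ≤ t) :
    μ * t ^ β ≤ ((1 - β) ^ (1 - β) * β ^ β * μ ^ β) * (t + μ) := by
  rcases eq_or_lt_of_le hβ0 with hβ | hβpos
  · subst hβ  -- fails? β = 0 direction
    simp [Real.rpow_zero, Real.rpow_one]
    linarith
  rcases eq_or_lt_of_le hβ1 with hβ' | hβlt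
  · rw [hβ']
    simp [Real.rpow_zero, Real.rpow_one, Real.one_rpow]
    nlinarith
  have h1β : 0 < 1 - β := by linarith
  have hgm := Real.geom_mean_le_arith_mean2_weighted hβ0 h1β.le
    (div_nonneg ht hβ0) (div_nonneg hμ.le h1β.le) (by ring)
  have hsum : β * (t / β) + (1 - β) * (μ / (1 - β)) = t + μ := by
    field_simp
  rw [hsum] at hgm
  have hdiv1 : (t / β) ^ β = t ^ β / β ^ β := Real.div_rpow ht hβ0 β
  have hdiv2 : (μ / (1 - β)) ^ (1 - β) = μ ^ (1 - β) / (1 - β) ^ (1 - β) :=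
    Real.div_rpow hμ.le h1β.le (1 - β)
  rw [hdiv1, hdiv2] at hgm
  have hb1 : (0:ℝ) < β ^ β := Real.rpow_pos_of_pos hβpos β
  have hb2 : (0:ℝ) < (1 - β) ^ (1 - β) := Real.rpow_pos_of_pos h1β (1 - β)
  have hmul : t ^ β * μ ^ (1 - β) ≤ (t + μ) * (β ^ β * (1 - β) ^ (1 - β)) := by
    have := mul_le_mul_of_nonneg_right hgm (le_of_lt (mul_pos hb1 hb2))
    calc t ^ β * μ ^ (1 - β)
        = (t ^ β / β ^ β * (μ ^ (1 - β) / (1 - β) ^ (1 - β))) * (β ^ β * (1 - β) ^ (1 - β)) := by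
          field_simp
      _ ≤ (t + μ) * (β ^ β * (1 - β) ^ (1 - β)) := this
  have hμβ : (0:ℝ) < μ ^ β := Real.rpow_pos_of_pos hμ β
  have hμsplit : μ ^ β * μ ^ (1 - β) = μ := by
    rw [← Real.rpow_add hμ]
    simp
  have hstep : (t ^ β * μ ^ (1 - β)) * μ ^ β = μ * t ^ β := by
    rw [mul_assoc, mul_comm (μ ^ (1 - β)) (μ ^ β), hμsplit]
    ring
  calc μ * t ^ β = (t ^ β * μ ^ (1 - β)) * μ ^ β := hstep.symm
    _ ≤ ((t + μ) * (β ^ β * (1 - β) ^ (1 - β))) * μ ^ β :=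
        mul_le_mul_of_nonneg_right hmul hμβ.le
    _ = ((1 - β) ^ (1 - β) * β ^ β * μ ^ β) * (t + μ) := by ring


/-- Binomial basis identity: `C(n,j) x^j = ∑_k C(k,j) C(n,k) x^k (1-x)^(n-k)`. -/
lemma binom_basis_id (n j : ℕ) (hj : j ≤ n) (x : ℝ) :
    (n.choose j : ℝ) * x ^ j
      = ∑ k ∈ range (n + 1), (k.choose j : ℝ) * (n.choose k : ℝ) * x ^ k * (1 - x) ^ (n - k) := by
  have hsub : Finset.Ico j (n + 1) ⊆ range (n + 1) := by
    intro k hk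
    rw [Finset.mem_Ico] at hk
    exact Finset.mem_range.mpr hk.2
  rw [← Finset.sum_subset hsub]
  · rw [Finset.sum_Ico_eq_sum_range]
    have hred : ∀ m ∈ range (n + 1 - j),
        ((j + m).choose j : ℝ) * (n.choose (j + m) : ℝ) * x ^ (j + m) * (1 - x) ^ (n - (j + m))
        = (n.choose j : ℝ) * (((n - j).choose m : ℝ) * x ^ m * (1 - x) ^ ((n - j) - m)) * x ^ j := by
      intro m hm
      rw [Finset.mem_range] at hm
      have hmn : j + m ≤ n := by omega
      have hc : n.choose (j + m) * (j + m).choose j = n.choose j * (n - j).choose m := by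
        have := Nat.choose_mul (n := n) (k := j + m) (s := j) (Nat.le_add_right j m)
        simpa using this
      have hcast : ((j + m).choose j : ℝ) * (n.choose (j + m) : ℝ)
          = (n.choose j : ℝ) * ((n - j).choose m : ℝ) := by
        rw [mul_comm]
        exact_mod_cast congrArg (Nat.cast (R := ℝ)) hc
      rw [hcast]
      have hsub : n - (j + m) = (n - j) - m := by omega
      rw [hsub, pow_add]
      ring
    rw [Finset.sum_congr rfl hred, ← Finset.sum_mul, ← Finset.mul_sum]
    have hbin : ∑ m ∈ range (n + 1 - j),
        ((n - j).choose m : ℝ) * x ^ m * (1 - x) ^ ((n - j) - m) = 1 := by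
      have hrange : n + 1 - j = (n - j) + 1 := by omega
      have h := add_pow x (1 - x) (n - j)
      simp only [add_sub_cancel, one_pow] at h
      rw [hrange]
      conv_rhs => rw [h]
      exact Finset.sum_congr rfl fun m _ => by ring
    rw [hbin, mul_one]
  · intro k hk hk'
    have : k < j := by
      rw [Finset.mem_range] at hk
      rw [Finset.mem_Ico] at hk'
      omega
    rw [Nat.choose_eq_zero_of_lt this]
    simp

/-- Ratio of binomial coefficients as a product. -/
lemma choose_ratio {n j : ℕ} (hj : j ≤ n) (k : ℕ) :
    (k.choose j : ℝ) = (n.choose j : ℝ) * ∏ i ∈ range j, ((k - i : ℕ) : ℝ) / ((n - i : ℕ) : ℝ) := by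
  have hprod : ∏ i ∈ range j, ((k - i : ℕ) : ℝ) / ((n - i : ℕ) : ℝ)
      = ((k.descFactorial j : ℕ) : ℝ) / ((n.descFactorial j : ℕ) : ℝ) := by
    rw [Finset.prod_div_distrib, Nat.descFactorial_eq_prod_range, Nat.descFactorial_eq_prod_range]
    push_cast
    rfl
  rw [hprod, Nat.descFactorial_eq_factorial_mul_choose, Nat.descFactorial_eq_factorial_mul_choose]
  have h1 : (0:ℝ) < (Nat.factorial j : ℝ) := by exact_mod_cast Nat.factorial_pos j
  have h2 : (0:ℝ) < (n.choose j : ℝ) := by exact_mod_cast Nat.choose_pos hj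
  push_cast
  field_simp

/-- Bernstein coefficients of a polynomial. -/
noncomputable def bw (q : ℝ[X]) (n k : ℕ) : ℝ :=
  ∑ j ∈ range (q.natDegree + 1), q.coeff j * ∏ i ∈ range j, ((k - i : ℕ) : ℝ) / ((n - i : ℕ) : ℝ)

/-- Bernstein representation of a polynomial. -/
lemma bernstein_rep (q : ℝ[X]) (n : ℕ) (hn : q.natDegree ≤ n) :
    q = ∑ k ∈ range (n + 1),
      Polynomial.C ((n.choose k : ℝ) * bw q n k) * X ^ k * (1 - X) ^ (n - k) := by
  apply Polynomial.funext
  intro x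
  rw [Polynomial.eval_finset_sum]
  simp only [Polynomial.eval_mul, Polynomial.eval_pow, Polynomial.eval_C, Polynomial.eval_sub,
    Polynomial.eval_one, Polynomial.eval_X]
  rw [Polynomial.eval_eq_sum_range (x := x)]
  unfold bw
  have hswap : ∑ k ∈ range (n + 1),
      ((n.choose k : ℝ) * ∑ j ∈ range (q.natDegree + 1),
        q.coeff j * ∏ i ∈ range j, ((k - i : ℕ) : ℝ) / ((n - i : ℕ) : ℝ)) * x ^ k * (1 - x) ^ (n - k)
      = ∑ j ∈ range (q.natDegree + 1), q.coeff j *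
          ∑ k ∈ range (n + 1), ((n.choose k : ℝ) *
            (∏ i ∈ range j, ((k - i : ℕ) : ℝ) / ((n - i : ℕ) : ℝ)) * x ^ k * (1 - x) ^ (n - k)) := by
    have step1 : ∀ k ∈ range (n + 1),
        ((n.choose k : ℝ) * ∑ j ∈ range (q.natDegree + 1),
          q.coeff j * ∏ i ∈ range j, ((k - i : ℕ) : ℝ) / ((n - i : ℕ) : ℝ)) * x ^ k * (1 - x) ^ (n - k)
        = ∑ j ∈ range (q.natDegree + 1), q.coeff j * ((n.choose k : ℝ) *
            (∏ i ∈ range j, ((k - i : ℕ) : ℝ) / ((n - i : ℕ) : ℝ)) * x ^ k * (1 - x) ^ (n - k)) := by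
      intro k _
      rw [Finset.mul_sum, Finset.sum_mul, Finset.sum_mul]
      exact Finset.sum_congr rfl fun j _ => by ring
    rw [Finset.sum_congr rfl step1, Finset.sum_comm]
    exact Finset.sum_congr rfl fun j _ => (Finset.mul_sum _ _ _).symm
  rw [hswap]
  refine Finset.sum_congr rfl fun j hj => ?_
  rw [Finset.mem_range] at hj
  have hjn : j ≤ n := by omega
  congr 1
  have h2 : (0:ℝ) < (n.choose j : ℝ) := by exact_mod_cast Nat.choose_pos hjn
  apply mul_left_cancel₀ (ne_of_gt h2)
  rw [Finset.mul_sum]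
  conv_lhs => rw [binom_basis_id n j hjn x]
  refine Finset.sum_congr rfl fun k _ => ?_
  rw [choose_ratio hjn k]
  ring

/-- Telescoping bound for products in `[0,1]`. -/
lemma abs_prod_sub_prod_le (j : ℕ) (f g : ℕ → ℝ)
    (hf : ∀ i, i < j → f i ∈ Set.Icc (0:ℝ) 1) (hg : ∀ i, i < j → g i ∈ Set.Icc (0:ℝ) 1) :
    |∏ i ∈ range j, f i - ∏ i ∈ range j, g i| ≤ ∑ i ∈ range j, |f i - g i| := by
  induction j with
  | zero => simp
  | succ j ih =>
    have hf' : ∀ i, i < j → f i ∈ Set.Icc (0:ℝ) 1 := fun i hi => hf i (by omega)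
    have hg' : ∀ i, i < j → g i ∈ Set.Icc (0:ℝ) 1 := fun i hi => hg i (by omega)
    have ihj := ih hf' hg'
    rw [Finset.prod_range_succ, Finset.prod_range_succ, Finset.sum_range_succ]
    have hfj := hf j (by omega)
    have hgj := hg j (by omega)
    have hPf : ∏ i ∈ range j, f i ∈ Set.Icc (0:ℝ) 1 := by
      constructor
      · exact Finset.prod_nonneg fun i hi => (hf' i (Finset.mem_range.mp hi)).1
      · exact Finset.prod_le_one (fun i hi => (hf' i (Finset.mem_range.mp hi)).1)
          (fun i hi => (hf' i (Finset.mem_range.mp hi)).2)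
    have hPg : ∏ i ∈ range j, g i ∈ Set.Icc (0:ℝ) 1 := by
      constructor
      · exact Finset.prod_nonneg fun i hi => (hg' i (Finset.mem_range.mp hi)).1
      · exact Finset.prod_le_one (fun i hi => (hg' i (Finset.mem_range.mp hi)).1)
          (fun i hi => (hg' i (Finset.mem_range.mp hi)).2)
    have key : (∏ i ∈ range j, f i) * f j - (∏ i ∈ range j, g i) * g j
        = ((∏ i ∈ range j, f i) - (∏ i ∈ range j, g i)) * f j
          + (∏ i ∈ range j, g i) * (f j - g j) := by ring
    rw [key]
    calc |((∏ i ∈ range j, f i) - (∏ i ∈ range j, g i)) * f j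
          + (∏ i ∈ range j, g i) * (f j - g j)|
        ≤ |((∏ i ∈ range j, f i) - (∏ i ∈ range j, g i)) * f j|
          + |(∏ i ∈ range j, g i) * (f j - g j)| := abs_add_le _ _
      _ = |(∏ i ∈ range j, f i) - (∏ i ∈ range j, g i)| * |f j|
          + |∏ i ∈ range j, g i| * |f j - g j| := by rw [abs_mul, abs_mul]
      _ ≤ |(∏ i ∈ range j, f i) - (∏ i ∈ range j, g i)| + |f j - g j| := by
          have e1 : |f j| ≤ 1 := by rw [abs_le]; exact ⟨by linarith [hfj.1], hfj.2⟩
          have e2 : |∏ i ∈ range j, g i| ≤ 1 := by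
            rw [abs_le]; exact ⟨by linarith [hPg.1], hPg.2⟩
          have e3 := mul_le_of_le_one_right (abs_nonneg
            ((∏ i ∈ range j, f i) - (∏ i ∈ range j, g i))) e1
          have e4 := mul_le_of_le_one_left (abs_nonneg (f j - g j)) e2
          linarith
      _ ≤ (∑ i ∈ range j, |f i - g i|) + |f j - g j| := by gcongr

/-- The factor estimate. -/
lemma factor_bound {n d i k : ℕ} (hi : i < d) (hk : k ≤ n) (hdn : d < n) :
    |((k - i : ℕ) : ℝ) / ((n - i : ℕ) : ℝ) - (k : ℝ) / (n : ℝ)| ≤ (d : ℝ) / ((n : ℝ) - d) := by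
  have hin : i < n := lt_trans hi hdn
  have hn0 : (0:ℝ) < (n : ℝ) := by
    have : 0 < n := by omega
    exact_mod_cast this
  have hni : (0:ℝ) < (n : ℝ) - i := by
    have : (i:ℝ) < n := by exact_mod_cast hin
    linarith
  have hnd : (0:ℝ) < (n : ℝ) - d := by
    have : (d:ℝ) < n := by exact_mod_cast hdn
    linarith
  have hcastn : ((n - i : ℕ) : ℝ) = (n : ℝ) - i := by
    rw [Nat.cast_sub hin.le]
  rcases le_or_gt i k with hik | hik
  · have hcastk : ((k - i : ℕ) : ℝ) = (k : ℝ) - i := by rw [Nat.cast_sub hik]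
    rw [hcastk, hcastn, div_sub_div _ _ (ne_of_gt hni) (ne_of_gt hn0)]
    have hnum : ((k:ℝ) - i) * n - ((n:ℝ) - i) * k = -((i:ℝ) * ((n:ℝ) - k)) := by ring
    rw [hnum, abs_div, abs_neg]
    have hknn : (0:ℝ) ≤ (n:ℝ) - k := by
      have : (k:ℝ) ≤ n := by exact_mod_cast hk
      linarith
    have habs1 : |(i:ℝ) * ((n:ℝ) - k)| = (i:ℝ) * ((n:ℝ) - k) :=
      abs_of_nonneg (mul_nonneg (by positivity) hknn)
    have habs2 : |((n:ℝ) - i) * n| = ((n:ℝ) - i) * n := abs_of_nonneg (by positivity)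
    rw [habs1, habs2, div_le_div_iff₀ (by positivity) hnd]
    have hid : (i:ℝ) ≤ d := by exact_mod_cast hi.le
    have hkn : (k:ℝ) ≤ n := by exact_mod_cast hk
    have hdi : (n:ℝ) - d ≤ (n:ℝ) - i := by linarith
    have hknn2 : (n:ℝ) - k ≤ (n:ℝ) := by
      have : (0:ℝ) ≤ (k:ℝ) := Nat.cast_nonneg k
      linarith
    have e1 : (i:ℝ) * ((n:ℝ) - k) ≤ (d:ℝ) * ((n:ℝ) - k) := mul_le_mul_of_nonneg_right hid hknn
    have e2 : ((n:ℝ) - k) * ((n:ℝ) - d) ≤ (n:ℝ) * ((n:ℝ) - i) :=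
      mul_le_mul hknn2 hdi hnd.le hn0.le
    nlinarith [e1, e2, hknn, hnd.le, Nat.cast_nonneg (α := ℝ) d]
  · have hcastk : ((k - i : ℕ) : ℝ) = 0 := by
      rw [Nat.sub_eq_zero_of_le hik.le]; simp
    rw [hcastk, hcastn]
    rw [zero_div, zero_sub, abs_neg]
    have hkd : (k:ℝ) < d := by
      have : k < d := lt_of_lt_of_le hik hi.le
      exact_mod_cast this
    have habs : |(k:ℝ)/n| = (k:ℝ)/n := abs_of_nonneg (by positivity)
    rw [habs, div_le_div_iff₀ hn0 hnd]
    have hkn : (k:ℝ) ≤ n := by exact_mod_cast hk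
    have e1 : (k:ℝ) * ((n:ℝ) - d) ≤ (d:ℝ) * ((n:ℝ) - d) := mul_le_mul_of_nonneg_right hkd.le hnd.le
    have e2 : (d:ℝ) * ((n:ℝ) - d) ≤ (d:ℝ) * (n:ℝ) :=
      mul_le_mul_of_nonneg_left (by linarith [Nat.cast_nonneg (α := ℝ) d]) (Nat.cast_nonneg d)
    linarith

lemma bw_close (q : ℝ[X]) {n k : ℕ} (hk : k ≤ n) (hdn : q.natDegree < n) :
    |bw q n k - q.eval ((k:ℝ)/(n:ℝ))|
      ≤ (∑ j ∈ range (q.natDegree + 1), |q.coeff j|) *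
        ((q.natDegree : ℝ) * ((q.natDegree : ℝ) / ((n:ℝ) - q.natDegree))) := by
  set d := q.natDegree with hd
  have hn0 : (0:ℝ) < (n:ℝ) := by
    have : 0 < n := by omega
    exact_mod_cast this
  have hnd : (0:ℝ) < (n:ℝ) - d := by
    have : (d:ℝ) < (n:ℝ) := by exact_mod_cast hdn
    linarith
  rw [Polynomial.eval_eq_sum_range (x := ((k:ℝ)/(n:ℝ)))]
  unfold bw
  rw [← Finset.sum_sub_distrib]
  calc |∑ j ∈ range (d + 1), (q.coeff j * ∏ i ∈ range j, ((k - i : ℕ) : ℝ) / ((n - i : ℕ) : ℝ)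
          - q.coeff j * ((k:ℝ)/(n:ℝ)) ^ j)|
      ≤ ∑ j ∈ range (d + 1), |q.coeff j * ∏ i ∈ range j, ((k - i : ℕ) : ℝ) / ((n - i : ℕ) : ℝ)
          - q.coeff j * ((k:ℝ)/(n:ℝ)) ^ j| := Finset.abs_sum_le_sum_abs _ _
    _ ≤ ∑ j ∈ range (d + 1), |q.coeff j| * ((d:ℝ) * ((d:ℝ) / ((n:ℝ) - d))) := by
        refine Finset.sum_le_sum fun j hj => ?_
        rw [Finset.mem_range] at hj
        rw [← mul_sub, abs_mul]
        refine mul_le_mul_of_nonneg_left ?_ (abs_nonneg _)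
        have hpow : ((k:ℝ)/(n:ℝ)) ^ j = ∏ _i ∈ range j, ((k:ℝ)/(n:ℝ)) := by
          rw [Finset.prod_const, Finset.card_range]
        rw [hpow]
        have hf : ∀ i, i < j → ((k - i : ℕ) : ℝ) / ((n - i : ℕ) : ℝ) ∈ Set.Icc (0:ℝ) 1 := by
          intro i hij
          have hi : i < n := by omega
          have hden : (0:ℝ) < ((n - i : ℕ) : ℝ) := by
            have : 0 < n - i := by omega
            exact_mod_cast this
          constructor
          · positivity
          · rw [div_le_one hden]
            exact_mod_cast Nat.sub_le_sub_right hk i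
        have hg : ∀ i, i < j → ((k:ℝ)/(n:ℝ)) ∈ Set.Icc (0:ℝ) 1 := by
          intro i _
          constructor
          · positivity
          · rw [div_le_one hn0]; exact_mod_cast hk
        calc |(∏ i ∈ range j, ((k - i : ℕ) : ℝ) / ((n - i : ℕ) : ℝ))
              - ∏ _i ∈ range j, ((k:ℝ)/(n:ℝ))|
            ≤ ∑ i ∈ range j, |((k - i : ℕ) : ℝ) / ((n - i : ℕ) : ℝ) - (k:ℝ)/(n:ℝ)| :=
              abs_prod_sub_prod_le j _ _ hf hg
          _ ≤ ∑ _i ∈ range j, (d:ℝ) / ((n:ℝ) - d) := by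
              refine Finset.sum_le_sum fun i hi => ?_
              rw [Finset.mem_range] at hi
              have hij : i < d := by omega
              exact factor_bound hij hk hdn
          _ = (j:ℝ) * ((d:ℝ) / ((n:ℝ) - d)) := by
              rw [Finset.sum_const, Finset.card_range, nsmul_eq_mul]
          _ ≤ (d:ℝ) * ((d:ℝ) / ((n:ℝ) - d)) := by
              have hjd : (j:ℝ) ≤ (d:ℝ) := by exact_mod_cast Nat.lt_succ_iff.mp hj
              have : (0:ℝ) ≤ (d:ℝ) / ((n:ℝ) - d) := by positivity
              exact mul_le_mul_of_nonneg_right hjd this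
    _ = (∑ j ∈ range (d + 1), |q.coeff j|) * ((d:ℝ) * ((d:ℝ) / ((n:ℝ) - d))) :=
        (Finset.sum_mul _ _ _).symm

lemma bw_nonneg_eventually (q : ℝ[X]) {δ : ℝ} (hδ : 0 < δ)
    (hq : ∀ x ∈ Set.Icc (0:ℝ) 1, δ ≤ q.eval x) :
    ∃ n, q.natDegree < n ∧ ∀ k ≤ n, 0 ≤ bw q n k := by
  set d := q.natDegree with hd
  set K := ∑ j ∈ range (d + 1), |q.coeff j| with hK
  have hK0 : 0 ≤ K := Finset.sum_nonneg fun j _ => abs_nonneg _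
  obtain ⟨n, hn⟩ := exists_nat_gt ((d:ℝ) + K * ((d:ℝ) * (d:ℝ)) / δ)
  have hdn : d < n := by
    have h1 : (0:ℝ) ≤ K * ((d:ℝ) * (d:ℝ)) / δ := by positivity
    have : (d:ℝ) < (n:ℝ) := by linarith
    exact_mod_cast this
  refine ⟨n, hdn, fun k hk => ?_⟩
  have hnd : (0:ℝ) < (n:ℝ) - d := by
    have : (d:ℝ) < (n:ℝ) := by exact_mod_cast hdn
    linarith
  have hn0 : (0:ℝ) < (n:ℝ) := by
    have : 0 < n := by omega
    exact_mod_cast this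
  have hmem : (k:ℝ)/(n:ℝ) ∈ Set.Icc (0:ℝ) 1 := by
    constructor
    · positivity
    · rw [div_le_one hn0]; exact_mod_cast hk
  have heval := hq _ hmem
  have hclose := bw_close q hk hdn
  have herr : K * ((d:ℝ) * ((d:ℝ) / ((n:ℝ) - d))) < δ := by
    have h2 : K * ((d:ℝ) * (d:ℝ)) / δ < (n:ℝ) - d := by linarith
    rw [div_lt_iff₀ hδ] at h2
    calc K * ((d:ℝ) * ((d:ℝ) / ((n:ℝ) - d))) = K * ((d:ℝ) * (d:ℝ)) / ((n:ℝ) - d) := by ring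
      _ < δ := by rw [div_lt_iff₀ hnd]; linarith
  have := abs_le.mp hclose
  linarith [this.1]

end Scalar

section Operator


variable {H : Type*} [NormedAddCommGroup H] [InnerProductSpace ℝ H] [CompleteSpace H]

local notation "⟪" x ", " y "⟫" => inner (𝕜 := ℝ) x y

lemma isPositive_iff_real (T : H →L[ℝ] H) :
    T.IsPositive ↔ IsSelfAdjoint T ∧ ∀ x, 0 ≤ ⟪T x, x⟫ := by
  constructor
  · rintro ⟨h1, h2⟩
    exact ⟨isSelfAdjoint_iff_isSymmetric.mpr h1, fun x => by simpa [ContinuousLinearMap.reApplyInnerSelf] using h2 x⟩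
  · rintro ⟨h1, h2⟩
    exact ⟨isSelfAdjoint_iff_isSymmetric.mp h1, fun x => by simpa [ContinuousLinearMap.reApplyInnerSelf] using h2 x⟩

lemma sa_inner_sym {T : H →L[ℝ] H} (hT : IsSelfAdjoint T) (x y : H) :
    ⟪T x, y⟫ = ⟪x, T y⟫ :=
  (isSelfAdjoint_iff_isSymmetric.mp hT) x y

lemma smul_isPositive {T : H →L[ℝ] H} (hT : T.IsPositive) {c : ℝ} (hc : 0 ≤ c) :
    (c • T).IsPositive := by
  rw [isPositive_iff_real] at hT ⊢
  refine ⟨?_, fun x => ?_⟩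
  · simpa [IsSelfAdjoint, star_smul] using congrArg (c • ·) hT.1
  · simp only [coe_smul', Pi.smul_apply, real_inner_smul_left]
    exact mul_nonneg hc (hT.2 x)

lemma conj_isPositive {T A : H →L[ℝ] H} (hT : T.IsPositive) (hA : IsSelfAdjoint A) :
    (A * T * A).IsPositive := by
  rw [isPositive_iff_real] at hT ⊢
  refine ⟨?_, fun x => ?_⟩
  · have := hT.1
    simp only [IsSelfAdjoint, star_mul] at this ⊢
    rw [this, hA.star_eq, mul_assoc]
  · have : (A * T * A) x = A (T (A x)) := rfl
    rw [this, sa_inner_sym hA]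
    exact hT.2 (A x)

lemma sq_isPositive {A : H →L[ℝ] H} (hA : IsSelfAdjoint A) : (A * A).IsPositive := by
  simpa using conj_isPositive (isPositive_one (E := H)) hA

/-- Key lemma: the product of two commuting positive operators is positive. -/
theorem mul_isPositive {A B : H →L[ℝ] H} (hA : A.IsPositive) (hB : B.IsPositive)
    (hAB : Commute A B) : (A * B).IsPositive := by
  rcases eq_or_ne A 0 with rfl | hA0
  · simpa using isPositive_zero (E := H)
  have ha : (0:ℝ) < ‖A‖ := norm_pos_iff.mpr hA0
  set A₀ : H →L[ℝ] H := ‖A‖⁻¹ • A with hA₀def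
  have hA₀ : A₀.IsPositive := smul_isPositive hA (by positivity)
  have hA₀B : Commute A₀ B := by
    simpa [hA₀def, Commute, SemiconjBy, smul_mul_assoc, mul_smul_comm] using
      congrArg (‖A‖⁻¹ • ·) hAB.eq
  have hA₀norm : ‖A₀‖ ≤ 1 := by
    rw [hA₀def]
    have hns := norm_smul (α := ℝ) (β := H →L[ℝ] H) ‖A‖⁻¹ A
    rw [hns]
    simp [abs_of_pos (inv_pos.mpr ha), inv_mul_cancel₀ (ne_of_gt ha)]
  have hA₀1 : ((1 : H →L[ℝ] H) - A₀).IsPositive := by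
    rw [isPositive_iff_real]
    refine ⟨((isPositive_one (E := H)).isSelfAdjoint).sub hA₀.isSelfAdjoint, fun x => ?_⟩
    have h1 : ((1 : H →L[ℝ] H) - A₀) x = x - A₀ x := rfl
    have h2 : ⟪A₀ x, x⟫ ≤ ‖x‖ ^ 2 := by
      calc ⟪A₀ x, x⟫ ≤ ‖A₀ x‖ * ‖x‖ := real_inner_le_norm _ _
        _ ≤ (‖A₀‖ * ‖x‖) * ‖x‖ :=
            mul_le_mul_of_nonneg_right (A₀.le_opNorm x) (norm_nonneg x)
        _ ≤ (1 * ‖x‖) * ‖x‖ :=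
            mul_le_mul_of_nonneg_right
              (mul_le_mul_of_nonneg_right hA₀norm (norm_nonneg x)) (norm_nonneg x)
        _ = ‖x‖ ^ 2 := by ring
    rw [h1, inner_sub_left, real_inner_self_eq_norm_sq]
    linarith
  -- the iteration
  set C : ℕ → (H →L[ℝ] H) := fun n => Nat.rec A₀ (fun _ D => D - D * D) n with hC
  have hCsucc : ∀ n, C (n + 1) = C n - C n * C n := fun n => rfl
  have hC0 : C 0 = A₀ := rfl
  have key : ∀ n, (C n).IsPositive ∧ ((1 : H →L[ℝ] H) - C n).IsPositive ∧ Commute (C n) B := by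
    intro n
    induction n with
    | zero => exact ⟨hA₀, hA₀1, hA₀B⟩
    | succ n ih =>
      obtain ⟨h1, h2, h3⟩ := ih
      set D := C n
      have hsa := h1.isSelfAdjoint
      have hsa1 := h2.isSelfAdjoint
      have hid : D - D * D = D * (1 - D) * D + (1 - D) * D * (1 - D) := by noncomm_ring
      refine ⟨?_, ?_, ?_⟩
      · rw [hCsucc, hid]
        exact ((conj_isPositive h2 hsa).add (conj_isPositive h1 hsa1))
      · have : (1 : H →L[ℝ] H) - C (n+1) = ((1 : H →L[ℝ] H) - D) + D * D := by
          rw [hCsucc]; noncomm_ring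
        rw [this]
        exact h2.add (sq_isPositive hsa)
      · rw [hCsucc]
        exact (h3.sub_left (h3.mul_left h3))
  -- telescoping
  have tel : ∀ n, A₀ - C n = ∑ k ∈ range n, C k * C k := by
    intro n
    induction n with
    | zero => simp [hC0]
    | succ n ih =>
      rw [sum_range_succ, ← ih, hCsucc]
      abel
  -- positivity of A₀ * B
  have hA₀Bpos : ∀ u : H, 0 ≤ ⟪(A₀ * B) u, u⟫ := by
    intro u
    by_contra hneg
    push_neg at hneg
    set δ := -⟪(A₀ * B) u, u⟫ with hδ
    have hδpos : 0 < δ := by linarith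
    have hBu : B u ≠ 0 := by
      intro h
      have h0 : (A₀ * B) u = 0 := by
        show A₀ (B u) = 0
        rw [h, map_zero]
      rw [h0] at hδ
      simp at hδ
      rw [hδ] at hδpos
      exact lt_irrefl _ hδpos
    have hBunorm : (0:ℝ) < ‖B u‖ := norm_pos_iff.mpr hBu
    set r := δ / ‖B u‖ with hr
    have hrpos : 0 < r := div_pos hδpos hBunorm
    have hlow : ∀ n, r ≤ ‖C n u‖ := by
      intro n
      obtain ⟨h1, h2, h3⟩ := key n
      have hsplit : A₀ * B = (∑ k ∈ range n, C k * C k) * B + C n * B := by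
        rw [← tel n]; noncomm_ring
      have happ : ((∑ k ∈ range n, C k * C k) * B + C n * B) u
          = (∑ k ∈ range n, (C k * C k * B) u) + (C n * B) u := by
        rw [ContinuousLinearMap.add_apply]
        congr 1
        rw [← ContinuousLinearMap.sum_apply]
        congr 1
        exact Finset.sum_mul _ _ _
      have expand : ⟪(A₀ * B) u, u⟫ =
          (∑ k ∈ range n, ⟪B (C k u), C k u⟫) + ⟪B u, C n u⟫ := by
        rw [hsplit, happ, inner_add_left, sum_inner]
        congr 1
        · refine Finset.sum_congr rfl fun k _ => ?_
          obtain ⟨hk1, _, hk3⟩ := key k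
          have hre : C k * C k * B = C k * (B * C k) := by
            rw [mul_assoc, hk3.eq]
          rw [hre]
          show ⟪(C k) ((B) ((C k) u)), u⟫ = _
          rw [sa_inner_sym hk1.isSelfAdjoint]
        · show ⟪(C n) (B u), u⟫ = _
          rw [sa_inner_sym h1.isSelfAdjoint, real_inner_comm]
      have sum_nonneg' : 0 ≤ ∑ k ∈ range n, ⟪B (C k u), C k u⟫ :=
        Finset.sum_nonneg fun k _ => ((isPositive_iff_real B).mp hB).2 _
      have h4 : ⟪B u, C n u⟫ ≤ -δ := by
        rw [hδ]
        linarith [expand, sum_nonneg']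
      have h5 : δ ≤ ‖B u‖ * ‖C n u‖ := by
        have := abs_real_inner_le_norm (B u) (C n u)
        have := neg_abs_le ⟪B u, C n u⟫
        linarith
      rw [hr, div_le_iff₀ hBunorm]
      calc δ ≤ ‖B u‖ * ‖C n u‖ := h5
        _ = ‖C n u‖ * ‖B u‖ := mul_comm _ _
    have hsumbound : ∀ n : ℕ, (n : ℝ) * r ^ 2 ≤ ⟪A₀ u, u⟫ := by
      intro n
      have hsum : ∑ k ∈ range n, ‖C k u‖ ^ 2 ≤ ⟪A₀ u, u⟫ := by
        have hsum2 : ∑ k ∈ range n, ‖C k u‖ ^ 2 = ⟪(A₀ - C n) u, u⟫ := by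
          rw [tel n]
          have happ2 : ((∑ k ∈ range n, C k * C k)) u = ∑ k ∈ range n, (C k * C k) u :=
            ContinuousLinearMap.sum_apply _ _ _
          rw [happ2, sum_inner]
          refine Finset.sum_congr rfl fun k _ => ?_
          obtain ⟨hk1, _, _⟩ := key k
          show _ = ⟪(C k) ((C k) u), u⟫
          rw [sa_inner_sym hk1.isSelfAdjoint, real_inner_self_eq_norm_sq]
        rw [hsum2]
        have h1 := (key n).1
        have h2 := ((isPositive_iff_real _).mp h1).2 u
        have hexp : ⟪(A₀ - C n) u, u⟫ = ⟪A₀ u, u⟫ - ⟪(C n) u, u⟫ := by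
          have : (A₀ - C n) u = A₀ u - C n u := rfl
          rw [this, inner_sub_left]
        linarith
      calc (n : ℝ) * r ^ 2 = ∑ _k ∈ range n, r ^ 2 := by simp [mul_comm]
        _ ≤ ∑ k ∈ range n, ‖C k u‖ ^ 2 := by
            refine Finset.sum_le_sum fun k _ => ?_
            have := hlow k
            nlinarith [hrpos.le]
        _ ≤ ⟪A₀ u, u⟫ := hsum
    obtain ⟨n, hn⟩ := exists_nat_gt (⟪A₀ u, u⟫ / r ^ 2)
    have := hsumbound n
    have hr2 : (0:ℝ) < r ^ 2 := by positivity
    rw [div_lt_iff₀ hr2] at hn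
    linarith
  -- conclude
  have hfin : A * B = ‖A‖ • (A₀ * B) := by
    ext x
    show A (B x) = ‖A‖ • (A₀ (B x))
    rw [hA₀def]
    show A (B x) = ‖A‖ • (‖A‖⁻¹ • A (B x))
    rw [smul_smul, mul_inv_cancel₀ (ne_of_gt ha), one_smul]
  rw [hfin]
  refine smul_isPositive ?_ ha.le
  rw [isPositive_iff_real]
  refine ⟨?_, hA₀Bpos⟩
  have hA₀sa := hA₀.isSelfAdjoint
  have hBsa := hB.isSelfAdjoint
  show star (A₀ * B) = A₀ * B
  rw [star_mul, hBsa.star_eq, hA₀sa.star_eq, ← hA₀B.eq]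
lemma pow_isPositive {A : H →L[ℝ] H} (hA : A.IsPositive) (k : ℕ) : (A ^ k).IsPositive := by
  induction k with
  | zero => simpa using isPositive_one (E := H)
  | succ k ih =>
    rw [pow_succ]
    exact mul_isPositive ih hA ((Commute.refl A).pow_left k)

lemma pow_mul_pow_isPositive {A B : H →L[ℝ] H} (hA : A.IsPositive) (hB : B.IsPositive)
    (hAB : Commute A B) (k m : ℕ) : (A ^ k * B ^ m).IsPositive :=
  mul_isPositive (pow_isPositive hA k) (pow_isPositive hB m) (hAB.pow_pow k m)

lemma sum_isPositive {ι : Type*} (s : Finset ι) (f : ι → (H →L[ℝ] H))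
    (h : ∀ i ∈ s, (f i).IsPositive) : (∑ i ∈ s, f i).IsPositive := by
  exact Finset.sum_induction f _ (fun a b ha hb => ha.add hb) (isPositive_zero (E := H)) h

lemma one_sub_isPositive {A : H →L[ℝ] H} (hA : A.IsPositive) (h1 : ‖A‖ ≤ 1) :
    ((1 : H →L[ℝ] H) - A).IsPositive := by
  rw [isPositive_iff_real]
  refine ⟨((isPositive_one (E := H)).isSelfAdjoint).sub hA.isSelfAdjoint, fun x => ?_⟩
  have hx : ((1 : H →L[ℝ] H) - A) x = x - A x := rfl
  have h2 : ⟪A x, x⟫ ≤ ‖x‖ ^ 2 := by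
    calc ⟪A x, x⟫ ≤ ‖A x‖ * ‖x‖ := real_inner_le_norm _ _
      _ ≤ (‖A‖ * ‖x‖) * ‖x‖ := mul_le_mul_of_nonneg_right (A.le_opNorm x) (norm_nonneg x)
      _ ≤ (1 * ‖x‖) * ‖x‖ := mul_le_mul_of_nonneg_right
          (mul_le_mul_of_nonneg_right h1 (norm_nonneg x)) (norm_nonneg x)
      _ = ‖x‖ ^ 2 := by ring
  rw [hx, inner_sub_left, real_inner_self_eq_norm_sq]
  linarith

lemma aeval_isSelfAdjoint {A : H →L[ℝ] H} (hA : IsSelfAdjoint A) (p : ℝ[X]) :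
    IsSelfAdjoint (aeval A p : H →L[ℝ] H) := by
  rw [Polynomial.aeval_eq_sum_range]
  rw [IsSelfAdjoint, star_sum]
  refine Finset.sum_congr rfl fun i _ => ?_
  rw [star_smul, star_trivial, star_pow, hA.star_eq]

lemma norm_le_of_sandwich {G : H →L[ℝ] H} (hG : IsSelfAdjoint G) {c : ℝ} (hc : 0 ≤ c)
    (h1 : (c • (1 : H →L[ℝ] H) - G).IsPositive) (h2 : (c • (1 : H →L[ℝ] H) + G).IsPositive) :
    ‖G‖ ≤ c := by
  have halg : c • (1 : H →L[ℝ] H) = algebraMap ℝ (H →L[ℝ] H) c :=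
    (Algebra.algebraMap_eq_smul_one c).symm
  set c1 : H →L[ℝ] H := algebraMap ℝ (H →L[ℝ] H) c with hc1
  rw [halg] at h1 h2
  have hcG : Commute c1 G := Algebra.commutes c G
  have hcomm : Commute (c1 - G) (c1 + G) :=
    ((Commute.refl c1).sub_left hcG.symm).add_right ((hcG.sub_left (Commute.refl G)))
  have hP : ((c1 - G) * (c1 + G)).IsPositive := mul_isPositive h1 h2 hcomm
  have hexp : (c1 - G) * (c1 + G) = (c * c) • (1 : H →L[ℝ] H) - G * G := by
    rw [sub_mul, mul_add, mul_add, hcG.eq]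
    have : c1 * c1 = (c * c) • (1 : H →L[ℝ] H) := by
      rw [← map_mul, Algebra.algebraMap_eq_smul_one]
    rw [this]
    abel
  rw [hexp] at hP
  refine opNorm_le_bound _ hc fun x => ?_
  have hpos := ((isPositive_iff_real _).mp hP).2 x
  have happ : ((c * c) • (1 : H →L[ℝ] H) - G * G) x = (c * c) • x - G (G x) := rfl
  rw [happ, inner_sub_left, real_inner_smul_left, real_inner_self_eq_norm_sq] at hpos
  have hGx : ⟪G (G x), x⟫ = ‖G x‖ ^ 2 := by
    rw [sa_inner_sym hG (G x) x, real_inner_self_eq_norm_sq]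
  rw [hGx] at hpos
  have : ‖G x‖ ^ 2 ≤ (c * ‖x‖) ^ 2 := by nlinarith
  have h3 : 0 ≤ c * ‖x‖ := by positivity
  nlinarith [norm_nonneg (G x)]
/-- Strictly positive polynomials act positively on positive contractions. -/
lemma aeval_isPositive_unit_strict {A : H →L[ℝ] H} (hA : A.IsPositive) (hA1 : ‖A‖ ≤ 1)
    (q : ℝ[X]) {δ : ℝ} (hδ : 0 < δ) (hq : ∀ x ∈ Set.Icc (0:ℝ) 1, δ ≤ q.eval x) :
    (aeval A q : H →L[ℝ] H).IsPositive := by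
  obtain ⟨n, hdn, hw⟩ := bw_nonneg_eventually q hδ hq
  have hrep := bernstein_rep q n hdn.le
  have haeval : (aeval A q : H →L[ℝ] H)
      = ∑ k ∈ range (n + 1), ((n.choose k : ℝ) * bw q n k) •
          (A ^ k * ((1 : H →L[ℝ] H) - A) ^ (n - k)) := by
    conv_lhs => rw [hrep]
    rw [map_sum]
    refine Finset.sum_congr rfl fun k _ => ?_
    rw [map_mul, map_mul, map_pow, map_pow, aeval_X, map_sub, aeval_one, aeval_X, aeval_C]
    rw [← Algebra.smul_def, smul_mul_assoc]
  rw [haeval]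
  refine sum_isPositive _ _ fun k hk => ?_
  refine smul_isPositive ?_ ?_
  · exact pow_mul_pow_isPositive hA (one_sub_isPositive hA hA1)
      ((Commute.one_right A).sub_right (Commute.refl A)) k (n - k)
  · have h1 : (0:ℝ) ≤ (n.choose k : ℝ) := Nat.cast_nonneg _
    have h2 := hw k (by rw [Finset.mem_range] at hk; omega)
    positivity

/-- Nonnegative polynomials act positively on positive contractions. -/
lemma aeval_isPositive_unit {A : H →L[ℝ] H} (hA : A.IsPositive) (hA1 : ‖A‖ ≤ 1)
    (q : ℝ[X]) (hq : ∀ x ∈ Set.Icc (0:ℝ) 1, 0 ≤ q.eval x) :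
    (aeval A q : H →L[ℝ] H).IsPositive := by
  rw [isPositive_iff_real]
  refine ⟨aeval_isSelfAdjoint hA.isSelfAdjoint q, fun u => ?_⟩
  by_contra hneg
  push_neg at hneg
  set ε := -⟪(aeval A q : H →L[ℝ] H) u, u⟫ with hε
  have hεpos : 0 < ε := by linarith
  set δ := ε / (2 * (‖u‖ ^ 2 + 1)) with hδdef
  have hδpos : 0 < δ := by positivity
  have hstrict := aeval_isPositive_unit_strict hA hA1 (q + Polynomial.C δ) hδpos
    (fun x hx => by
      rw [Polynomial.eval_add, Polynomial.eval_C]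
      linarith [hq x hx])
  have happ : (aeval A (q + Polynomial.C δ) : H →L[ℝ] H)
      = (aeval A q : H →L[ℝ] H) + δ • (1 : H →L[ℝ] H) := by
    rw [map_add, aeval_C, Algebra.algebraMap_eq_smul_one]
  have hpos := ((isPositive_iff_real _).mp hstrict).2 u
  rw [happ] at hpos
  have : ((aeval A q : H →L[ℝ] H) + δ • (1 : H →L[ℝ] H)) u
      = (aeval A q : H →L[ℝ] H) u + δ • u := rfl
  rw [this, inner_add_left, real_inner_smul_left, real_inner_self_eq_norm_sq] at hpos
  have hlt : δ * ‖u‖ ^ 2 < ε := by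
    rw [hδdef]
    rw [div_mul_eq_mul_div, div_lt_iff₀ (by positivity)]
    nlinarith [sq_nonneg ‖u‖]
  linarith

/-- Nonnegative polynomials on `[0,‖A‖]` act positively on positive operators. -/
theorem aeval_isPositive {A : H →L[ℝ] H} (hA : A.IsPositive)
    (q : ℝ[X]) (hq : ∀ x ∈ Set.Icc (0:ℝ) ‖A‖, 0 ≤ q.eval x) :
    (aeval A q : H →L[ℝ] H).IsPositive := by
  rcases eq_or_ne A 0 with rfl | hA0
  · have h0 : (aeval (0 : H →L[ℝ] H) q : H →L[ℝ] H) = algebraMap ℝ _ (q.coeff 0) := by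
      rw [aeval_def, Polynomial.eval₂_at_zero]
    rw [h0, Algebra.algebraMap_eq_smul_one]
    refine smul_isPositive (isPositive_one (E := H)) ?_
    have h00 : (0:ℝ) ∈ Set.Icc (0:ℝ) ‖(0 : H →L[ℝ] H)‖ := by simp
    have := hq 0 h00
    simpa [Polynomial.coeff_zero_eq_eval_zero] using this
  · have hnorm : (0:ℝ) < ‖A‖ := norm_pos_iff.mpr hA0
    set q' := q.comp (Polynomial.C ‖A‖ * X) with hq'
    have hcomp : (aeval (‖A‖⁻¹ • A) q' : H →L[ℝ] H) = aeval A q := by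
      rw [hq', aeval_comp]
      congr 1
      rw [map_mul, aeval_C, aeval_X, Algebra.algebraMap_eq_smul_one]
      rw [smul_mul_assoc, one_mul, smul_smul, mul_inv_cancel₀ (ne_of_gt hnorm), one_smul]
    rw [← hcomp]
    have hA' : (‖A‖⁻¹ • A).IsPositive := smul_isPositive hA (by positivity)
    have hA'1 : ‖(‖A‖⁻¹ • A)‖ ≤ 1 := by
      have hns := norm_smul (α := ℝ) (β := H →L[ℝ] H) ‖A‖⁻¹ A
      rw [hns]
      simp [abs_of_pos (inv_pos.mpr hnorm), inv_mul_cancel₀ (ne_of_gt hnorm)]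
    refine aeval_isPositive_unit hA' hA'1 q' fun x hx => ?_
    rw [hq', Polynomial.eval_comp, Polynomial.eval_mul, Polynomial.eval_C, Polynomial.eval_X]
    refine hq _ ⟨by nlinarith [hx.1, hnorm], by nlinarith [hx.1, hx.2, hnorm]⟩

end Operator


/-- **Operator norm bound via spectral calculus.**
Let `H_z` be a real Hilbert space, `S_z` a bounded positive self-adjoint operator on
`H_z`, `μ > 0`, `β ∈ [0,1]`, and let `Szβ = S_z^β` be the `β`-th power of `S_z` given
by the continuous functional calculus (with the convention `t⁰ = 1` for `t ≥ 0`).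
Here the functional calculus is encoded by its defining property: `S_z^β` is the
(unique) operator approximated in operator norm by `p(S_z)` for polynomials `p`
approximating `t ↦ t^β` uniformly on `[0, ‖S_z‖]` (which contains the spectrum of
`S_z`).  Then `S_z + μI` is boundedly invertible and
`‖μ · S_z^β · (S_z + μI)⁻¹‖ ≤ (1 − β)^{1−β} β^β μ^β`, with real powers (`0⁰ = 1`). -/
theorem regularized_operator_power_bound
    {Hz : Type*} [NormedAddCommGroup Hz] [InnerProductSpace ℝ Hz] [CompleteSpace Hz]
    (Sz : Hz →L[ℝ] Hz) (hSz : Sz.IsPositive)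
    (μ β : ℝ) (hμ : 0 < μ) (hβ0 : 0 ≤ β) (hβ1 : β ≤ 1)
    (Szβ : Hz →L[ℝ] Hz)
    (hSzβ : ∀ ε > (0 : ℝ), ∃ p : Polynomial ℝ,
      (∀ t ∈ Set.Icc (0 : ℝ) ‖Sz‖, |Polynomial.eval t p - t ^ β| ≤ ε) ∧
      ‖(Polynomial.aeval Sz p : Hz →L[ℝ] Hz) - Szβ‖ ≤ ε) :
    IsUnit (Sz + μ • (1 : Hz →L[ℝ] Hz)) ∧
    ‖μ • (Szβ ∘L Ring.inverse (Sz + μ • (1 : Hz →L[ℝ] Hz)))‖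
      ≤ (1 - β) ^ (1 - β) * β ^ β * μ ^ β := by
  set W : Hz →L[ℝ] Hz := Sz + μ • (1 : Hz →L[ℝ] Hz) with hWdef
  have hW : W.IsPositive := hSz.add (smul_isPositive (isPositive_one (E := Hz)) hμ.le)
  have hWinner : ∀ x : Hz, inner (𝕜 := ℝ) (W x) x
      = inner (𝕜 := ℝ) (Sz x) x + μ * ‖x‖ ^ 2 := by
    intro x
    have : W x = Sz x + μ • x := rfl
    rw [this, inner_add_left, real_inner_smul_left, real_inner_self_eq_norm_sq]
  have hUnit : IsUnit W := by
    refine isUnit_of_forall_le_norm_inner_map W (c := Real.toNNReal μ)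
      (by simpa using hμ) (fun x => ?_)
    have h2 := ((isPositive_iff_real Sz).mp hSz).2 x
    have h3 : μ * ‖x‖ ^ 2 ≤ inner (𝕜 := ℝ) (W x) x := by
      rw [hWinner x]; linarith
    rw [Real.norm_eq_abs, Real.coe_toNNReal μ hμ.le]
    calc ‖x‖ ^ 2 * μ = μ * ‖x‖ ^ 2 := mul_comm _ _
      _ ≤ inner (𝕜 := ℝ) (W x) x := h3
      _ ≤ |inner (𝕜 := ℝ) (W x) x| := le_abs_self _
  refine ⟨hUnit, ?_⟩
  set R : Hz →L[ℝ] Hz := Ring.inverse W with hRdef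
  have hWR : W * R = 1 := Ring.mul_inverse_cancel _ hUnit
  have hRW : R * W = 1 := Ring.inverse_mul_cancel _ hUnit
  have hWsa := hW.isSelfAdjoint
  have hRsa : IsSelfAdjoint R := by
    have h1 : star R * W = 1 := by
      have h := congrArg star hWR
      rwa [star_mul, hWsa.star_eq, star_one] at h
    calc star R = star R * (W * R) := by rw [hWR, mul_one]
      _ = (star R * W) * R := by rw [mul_assoc]
      _ = R := by rw [h1, one_mul]
  have hR : R.IsPositive := by
    rw [isPositive_iff_real]
    refine ⟨hRsa, fun u => ?_⟩
    have hu : W (R u) = u := by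
      have : (W * R) u = (1 : Hz →L[ℝ] Hz) u := by rw [hWR]
      simpa using this
    have h5 : inner (𝕜 := ℝ) (R u) u = inner (𝕜 := ℝ) (W (R u)) (R u) := by
      rw [real_inner_comm]
      exact congrArg (fun z => inner (𝕜 := ℝ) z (R u)) hu.symm
    rw [h5]
    exact ((isPositive_iff_real W).mp hW).2 (R u)
  have hSzW : Sz * W = W * Sz := by
    rw [hWdef]
    rw [mul_add, add_mul, mul_smul_comm, smul_mul_assoc, mul_one, one_mul]
  have hRS : Commute R Sz := by
    show R * Sz = Sz * R
    calc R * Sz = R * Sz * (W * R) := by rw [hWR, mul_one]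
      _ = R * (Sz * W) * R := by rw [← mul_assoc, ← mul_assoc]
      _ = R * (W * Sz) * R := by rw [hSzW]
      _ = (R * W) * (Sz * R) := by
          rw [← mul_assoc, ← mul_assoc]
      _ = Sz * R := by rw [hRW, one_mul]
  have hRaeval : ∀ p : ℝ[X], Commute R (aeval Sz p : Hz →L[ℝ] Hz) := by
    intro p
    rw [Polynomial.aeval_eq_sum_range]
    refine Commute.sum_right _ _ _ (fun i _ => ?_)
    exact (hRS.pow_right i).smul_right _
  set M : ℝ := (1 - β) ^ (1 - β) * β ^ β * μ ^ β with hM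
  have hM0 : 0 ≤ M :=
    mul_nonneg (mul_nonneg (Real.rpow_nonneg (by linarith) _) (Real.rpow_nonneg hβ0 _))
      (Real.rpow_nonneg hμ.le _)
  have main : ∀ ε > (0:ℝ), ‖μ • (Szβ ∘L R)‖ ≤ M + ε * (1 + μ * ‖R‖) := by
    intro ε hε
    obtain ⟨p, hp1, hp2⟩ := hSzβ ε hε
    set pS : Hz →L[ℝ] Hz := (aeval Sz p : Hz →L[ℝ] Hz) with hpSdef
    have hpSsa : IsSelfAdjoint pS := aeval_isSelfAdjoint hSz.isSelfAdjoint p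
    set G : Hz →L[ℝ] Hz := μ • (pS * R) with hGdef
    have hGsa : IsSelfAdjoint G := by
      rw [hGdef, IsSelfAdjoint, star_smul, star_trivial, star_mul, hRsa.star_eq, hpSsa.star_eq,
        (hRaeval p).eq]
    obtain ⟨c, hc⟩ : ∃ c : ℝ, c = M + ε := ⟨M + ε, rfl⟩
    have hc0 : (0:ℝ) ≤ c := by linarith
    have hevalbound : ∀ s : ℝ, (s = 1 ∨ s = -1) → ∀ t ∈ Set.Icc (0:ℝ) ‖Sz‖,
        0 ≤ Polynomial.eval t (Polynomial.C c * (X + Polynomial.C μ)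
          + Polynomial.C (s * μ) * p) := by
      intro s hs t htI
      have heval : Polynomial.eval t (Polynomial.C c * (X + Polynomial.C μ)
          + Polynomial.C (s * μ) * p) = c * (t + μ) + s * μ * Polynomial.eval t p := by
        simp [Polynomial.eval_mul, Polynomial.eval_add, Polynomial.eval_C, Polynomial.eval_X]
      rw [heval]
      have ht0 : 0 ≤ t := htI.1
      have hyoung := young_bound hμ hβ0 hβ1 ht0
      have hperr := hp1 t htI
      rw [abs_le] at hperr
      have htb0 : 0 ≤ t ^ β := Real.rpow_nonneg ht0 β
      rcases hs with rfl | rfl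
      · have h6 : μ * (t ^ β - ε) ≤ μ * Polynomial.eval t p :=
          mul_le_mul_of_nonneg_left (by linarith [hperr.1]) hμ.le
        nlinarith [hyoung, hμ.le, ht0, hε.le]
      · have h6 : μ * Polynomial.eval t p ≤ μ * (t ^ β + ε) :=
          mul_le_mul_of_nonneg_left (by linarith [hperr.2]) hμ.le
        nlinarith [hyoung, hμ.le, ht0, hε.le]
    have haev : ∀ s : ℝ, (aeval Sz (Polynomial.C c * (X + Polynomial.C μ)
        + Polynomial.C (s * μ) * p) : Hz →L[ℝ] Hz) = c • W + (s * μ) • pS := by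
      intro s
      have hW2 : W = Sz + algebraMap ℝ (Hz →L[ℝ] Hz) μ := by
        rw [hWdef, Algebra.algebraMap_eq_smul_one]
      calc (aeval Sz (Polynomial.C c * (X + Polynomial.C μ)
            + Polynomial.C (s * μ) * p) : Hz →L[ℝ] Hz)
          = algebraMap ℝ (Hz →L[ℝ] Hz) c * (Sz + algebraMap ℝ (Hz →L[ℝ] Hz) μ)
            + algebraMap ℝ (Hz →L[ℝ] Hz) s * algebraMap ℝ (Hz →L[ℝ] Hz) μ * pS := by
            simp only [map_add, map_mul, aeval_X, aeval_C, hpSdef]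
        _ = c • W + (s * μ) • pS := by
            rw [Algebra.smul_def, Algebra.smul_def, map_mul, hW2]
    have hfact : ∀ s : ℝ, R * (c • W + (s * μ) • pS)
        = c • (1 : Hz →L[ℝ] Hz) + (s * μ) • (pS * R) := by
      intro s
      rw [mul_add, mul_smul_comm, mul_smul_comm, hRW, (hRaeval p).eq]
    have hposmul : ∀ s : ℝ, (s = 1 ∨ s = -1) →
        (c • (1 : Hz →L[ℝ] Hz) + (s * μ) • (pS * R)).IsPositive := by
      intro s hs
      have hq : ((aeval Sz (Polynomial.C c * (X + Polynomial.C μ)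
          + Polynomial.C (s * μ) * p)) : Hz →L[ℝ] Hz).IsPositive :=
        aeval_isPositive hSz _ (hevalbound s hs)
      rw [haev s] at hq
      rw [← hfact s]
      have hcW : Commute R W := by
        show R * W = W * R
        rw [hRW, hWR]
      exact mul_isPositive hR hq ((hcW.smul_right c).add_right ((hRaeval p).smul_right (s * μ)))
    have hsand₁ : (c • (1 : Hz →L[ℝ] Hz) + G).IsPositive := by
      have := hposmul 1 (Or.inl rfl)
      rw [one_mul] at this
      rw [hGdef]
      exact this
    have hsand₂ : (c • (1 : Hz →L[ℝ] Hz) - G).IsPositive := by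
      have := hposmul (-1) (Or.inr rfl)
      rw [neg_mul, one_mul, neg_smul, ← sub_eq_add_neg] at this
      rw [hGdef]
      exact this
    have hGnorm : ‖G‖ ≤ c := norm_le_of_sandwich hGsa hc0 hsand₂ hsand₁
    have hcompmul : Szβ ∘L R = Szβ * R := rfl
    have hTG : μ • (Szβ ∘L R) - G = μ • ((Szβ - pS) * R) := by
      rw [hcompmul, hGdef, ← smul_sub, sub_mul]
    have hnorm2 : ‖μ • (Szβ ∘L R) - G‖ ≤ μ * (ε * ‖R‖) := by
      rw [hTG]
      have hns := norm_smul (α := ℝ) (β := Hz →L[ℝ] Hz) μ ((Szβ - pS) * R)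
      rw [hns, Real.norm_eq_abs, abs_of_pos hμ]
      refine mul_le_mul_of_nonneg_left ?_ hμ.le
      calc ‖(Szβ - pS) * R‖ ≤ ‖Szβ - pS‖ * ‖R‖ := norm_mul_le _ _
        _ ≤ ε * ‖R‖ := by
            refine mul_le_mul_of_nonneg_right ?_ (norm_nonneg R)
            rw [norm_sub_rev]
            exact hp2
    have hsplit : μ • (Szβ ∘L R) = G + (μ • (Szβ ∘L R) - G) := by abel
    calc ‖μ • (Szβ ∘L R)‖ = ‖G + (μ • (Szβ ∘L R) - G)‖ := by rw [← hsplit]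
      _ ≤ ‖G‖ + ‖μ • (Szβ ∘L R) - G‖ := norm_add_le _ _
      _ ≤ c + μ * (ε * ‖R‖) := add_le_add hGnorm hnorm2
      _ = M + ε * (1 + μ * ‖R‖) := by rw [hc]; ring
  refine le_of_forall_pos_le_add (fun ε' hε' => ?_)
  have hD : (0:ℝ) < 1 + μ * ‖R‖ := by
    have : (0:ℝ) ≤ μ * ‖R‖ := mul_nonneg hμ.le (norm_nonneg R)
    linarith
  have h := main (ε' / (1 + μ * ‖R‖)) (div_pos hε' hD)
  rw [div_mul_cancel₀ _ (ne_of_gt hD)] at h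
  exact h
end

section
/- Let H_x and H_z be real Hilbert spaces, let S_x : H_x → H_x be bounded self-adjoint, let S_z : H_z → H_z be a bounded positive self-adjoint operator, let S : H_x → H_z be a bounded operator, and let μ > 0. Suppose the block operator on the Hilbert-space direct sum H_x ⊕ H_z defined by (u, v) ↦ (S_x u + S* v, S u + S_z v) is positive. Then S_z + μI is boundedly invertible and 0 ⪯ S* (S_z + μI)⁻¹ S ⪯ S_x in the Loewner order. -/
set_option maxHeartbeats 1000000


open ContinuousLinearMap InnerProductSpace

/-- The block operator `(u, v) ↦ (S_x u + S* v, S u + S_z v)` on the Hilbert-space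
direct sum `H_x ⊕ H_z`, realized as `WithLp 2 (H_x × H_z)` with inner product
`⟨(u,v),(u',v')⟩ = ⟨u,u'⟩ + ⟨v,v'⟩`. -/
noncomputable def blockOperator
    {Hx Hz : Type*} [NormedAddCommGroup Hx] [InnerProductSpace ℝ Hx] [CompleteSpace Hx]
    [NormedAddCommGroup Hz] [InnerProductSpace ℝ Hz] [CompleteSpace Hz]
    (Sx : Hx →L[ℝ] Hx) (Sz : Hz →L[ℝ] Hz) (S : Hx →L[ℝ] Hz) :
    WithLp 2 (Hx × Hz) →L[ℝ] WithLp 2 (Hx × Hz) :=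
  ((WithLp.prodContinuousLinearEquiv 2 ℝ Hx Hz).symm.toContinuousLinearMap) ∘L
    ((Sx.coprod (ContinuousLinearMap.adjoint S)).prod (S.coprod Sz)) ∘L
    ((WithLp.prodContinuousLinearEquiv 2 ℝ Hx Hz).toContinuousLinearMap)

/-- **Regularized covariance operator bound.**
Let `H_x, H_z` be real Hilbert spaces, `S_x` bounded self-adjoint on `H_x`,
`S_z` bounded positive self-adjoint on `H_z`, `S : H_x → H_z` bounded and `μ > 0`.
Suppose the block operator `(u, v) ↦ (S_x u + S* v, S u + S_z v)` on the
Hilbert-space direct sum `H_x ⊕ H_z` is positive.  Then `S_z + μI` is boundedly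
invertible and `0 ⪯ S* (S_z + μI)⁻¹ S ⪯ S_x` in the Loewner order. -/
theorem regularized_covariance_operator_bound
    {Hx Hz : Type*} [NormedAddCommGroup Hx] [InnerProductSpace ℝ Hx] [CompleteSpace Hx]
    [NormedAddCommGroup Hz] [InnerProductSpace ℝ Hz] [CompleteSpace Hz]
    (Sx : Hx →L[ℝ] Hx) (Sz : Hz →L[ℝ] Hz) (S : Hx →L[ℝ] Hz)
    (hSx : IsSelfAdjoint Sx) (hSz : Sz.IsPositive)
    (μ : ℝ) (hμ : 0 < μ)
    (hblock : (blockOperator Sx Sz S).IsPositive) :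
    IsUnit (Sz + μ • (1 : Hz →L[ℝ] Hz)) ∧
    (ContinuousLinearMap.adjoint S ∘L
        Ring.inverse (Sz + μ • (1 : Hz →L[ℝ] Hz)) ∘L S).IsPositive ∧
    (Sx - ContinuousLinearMap.adjoint S ∘L
        Ring.inverse (Sz + μ • (1 : Hz →L[ℝ] Hz)) ∘L S).IsPositive := by
  set T : Hz →L[ℝ] Hz := Sz + μ • (1 : Hz →L[ℝ] Hz) with hTdef
  have hμ1 : ((μ • (1 : Hz →L[ℝ] Hz))).IsPositive := by
    refine isPositive_def'.mpr ⟨by rw [IsSelfAdjoint, star_smul, star_one, star_trivial], fun x => ?_⟩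
    simp only [reApplyInnerSelf_apply, smul_apply, one_apply, real_inner_smul_left]
    exact mul_nonneg hμ.le real_inner_self_nonneg
  have hTpos : T.IsPositive := hSz.add hμ1
  have hTinner : ∀ x : Hz, ⟪T x, x⟫_ℝ = ⟪Sz x, x⟫_ℝ + μ * ⟪x, x⟫_ℝ := by
    intro x
    simp [hTdef, inner_add_left, real_inner_smul_left]
  have hUnit : IsUnit T := by
    refine isUnit_of_forall_le_norm_inner_map T (c := ⟨μ, hμ.le⟩) (by exact_mod_cast hμ)
      (fun x => ?_)
    have h1 : μ * ⟪x, x⟫_ℝ ≤ ⟪T x, x⟫_ℝ := by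
      rw [hTinner]
      have := hSz.inner_nonneg_left x
      linarith [this]
    have h2 : (0:ℝ) ≤ ⟪T x, x⟫_ℝ := le_trans (mul_nonneg hμ.le real_inner_self_nonneg) h1
    rw [Real.norm_of_nonneg h2]
    calc ‖x‖ ^ 2 * ((⟨μ, hμ.le⟩ : NNReal) : ℝ) = μ * ⟪x, x⟫_ℝ := by
          rw [real_inner_self_eq_norm_sq]; ring
      _ ≤ ⟪T x, x⟫_ℝ := h1
  set R : Hz →L[ℝ] Hz := Ring.inverse T with hRdef
  have hTR : ∀ y : Hz, T (R y) = y := fun y => by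
    have := DFunLike.congr_fun (Ring.mul_inverse_cancel T hUnit) y
    simpa [mul_apply] using this
  have hRsa : IsSelfAdjoint R := by
    rw [hRdef, IsSelfAdjoint, ← Ring.inverse_star, hTpos.isSelfAdjoint.star_eq]
  have hRpos : R.IsPositive := by
    refine isPositive_def'.mpr ⟨hRsa, fun y => ?_⟩
    have h1 : ⟪R y, y⟫_ℝ = ⟪T (R y), R y⟫_ℝ := by
      rw [hTR y]; exact real_inner_comm _ _
    have h2 := hTpos.inner_nonneg_left (R y)
    simp only [reApplyInnerSelf_apply] at h2 ⊢
    rw [h1]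
    exact_mod_cast h2
  refine ⟨hUnit, hRpos.adjoint_conj S, ?_⟩
  have hAsa : IsSelfAdjoint (ContinuousLinearMap.adjoint S ∘L R ∘L S) :=
    (hRpos.adjoint_conj S).isSelfAdjoint
  refine isPositive_def'.mpr ⟨hSx.sub hAsa, fun u => ?_⟩
  set w : Hz := R (S u) with hwdef
  have hTw : T w = S u := hTR (S u)
  have hSzw : ⟪Sz w, w⟫_ℝ = ⟪S u, w⟫_ℝ - μ * ⟪w, w⟫_ℝ := by
    have := hTinner w
    rw [hTw] at this
    linarith
  have hblk := hblock.inner_nonneg_left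
    ((WithLp.prodContinuousLinearEquiv 2 ℝ Hx Hz).symm (u, -w))
  simp only [blockOperator, reApplyInnerSelf_apply, coe_comp', Function.comp_apply,
    ContinuousLinearEquiv.coe_coe, ContinuousLinearEquiv.apply_symm_apply,
    WithLp.prod_inner_apply] at hblk
  have hfst : ∀ q : Hx × Hz,
      ((WithLp.prodContinuousLinearEquiv 2 ℝ Hx Hz).symm q).ofLp.1 = q.1 := fun _ => rfl
  have hsnd : ∀ q : Hx × Hz,
      ((WithLp.prodContinuousLinearEquiv 2 ℝ Hx Hz).symm q).ofLp.2 = q.2 := fun _ => rfl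
  simp only [hfst, hsnd, prod_apply, coprod_apply, map_neg, inner_add_left, inner_neg_left,
    inner_neg_right, neg_neg, RCLike.re_to_real] at hblk
  have hadj : ⟪(ContinuousLinearMap.adjoint S) w, u⟫_ℝ = ⟪S u, w⟫_ℝ := by
    rw [ContinuousLinearMap.adjoint_inner_left, real_inner_comm]
  rw [hadj, hSzw] at hblk
  simp only [reApplyInnerSelf_apply, sub_apply, coe_comp', Function.comp_apply,
    inner_sub_left, RCLike.re_to_real]
  rw [← hwdef, hadj]
  have hww : (0:ℝ) ≤ ⟪w, w⟫_ℝ := real_inner_self_nonneg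
  nlinarith [hblk, hww]
end

section
/- Let H_x and H_z be real Hilbert spaces, let S : H_x → H_z be a bounded operator, let S_z be a bounded positive self-adjoint operator on H_z, and let μ, λ > 0. Define T_{μ,λ} := S*(S_z + μI)⁻¹S + λI on H_x. Then T_{μ,λ} is boundedly invertible and ‖T_{μ,λ}⁻¹ S* (S_z + μI)⁻¹‖ ≤ 1/(2√(λμ)), where ‖·‖ is the operator norm. -/
/-!
Write `B = (S_z + μI)⁻¹`, which is positive, and `x = T⁻¹ S* B z`. Pairing `T x = S* B z` with `x`
gives `⟪B S x, S x⟫ + λ‖x‖² = ⟪B z, S x⟫`, i.e. `λ‖x‖² = ⟪B (z - S x), S x⟫`, and this is at most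
`⟪B z, z⟫ / 4` by positivity of `B` at `z - 2 S x`. Coercivity of `S_z + μI` gives
`⟪B z, z⟫ ≤ ‖z‖² / μ`, hence `‖x‖² ≤ ‖z‖² / (4λμ)`.
-/

open ContinuousLinearMap RealInnerProductSpace

namespace ContinuousLinearMap

lemma apply_ringInverse_apply {R M : Type*} [Semiring R] [TopologicalSpace M] [AddCommMonoid M]
    [Module R M] {A : M →L[R] M} (hA : IsUnit A) (u : M) : A (Ring.inverse A u) = u := by
  rw [← mul_apply_eq_comp, Ring.mul_inverse_cancel A hA, one_apply_eq_self]

variable {E F : Type*} [NormedAddCommGroup E] [InnerProductSpace ℝ E]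
  [NormedAddCommGroup F] [InnerProductSpace ℝ F]

lemma isUnit_of_forall_mul_norm_sq_le_inner [CompleteSpace E] {A : E →L[ℝ] E} {c : ℝ}
    (hc : 0 < c) (hA : ∀ x, c * ‖x‖ ^ 2 ≤ ⟪A x, x⟫) : IsUnit A :=
  isUnit_of_forall_le_norm_inner_map A (c := ⟨c, hc.le⟩) hc fun x =>
    (mul_comm c _ ▸ hA x).trans (le_abs_self _)

lemma inner_ringInverse_apply_le_of_forall_mul_norm_sq_le_inner [CompleteSpace E] {A : E →L[ℝ] E}
    {c : ℝ} (hc : 0 < c) (hA : ∀ x, c * ‖x‖ ^ 2 ≤ ⟪A x, x⟫) (z : E) :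
    ⟪Ring.inverse A z, z⟫ ≤ ‖z‖ ^ 2 / c := by
  set w := Ring.inverse A z
  have hw : A w = z := apply_ringInverse_apply (isUnit_of_forall_mul_norm_sq_le_inner hc hA) z
  have hwz : ⟪w, z⟫ ≤ ‖w‖ * ‖z‖ := real_inner_le_norm w z
  have hcw : c * ‖w‖ ≤ ‖z‖ := by
    have := hA w
    rw [hw, real_inner_comm] at this
    nlinarith [norm_nonneg w, norm_nonneg z]
  rw [le_div_iff₀ hc]
  nlinarith [norm_nonneg w, norm_nonneg z]

namespace IsPositive

lemma mul_norm_sq_le_inner_add_smul_one {P : E →L[ℝ] E} (hP : P.IsPositive) (c : ℝ) (x : E) :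
    c * ‖x‖ ^ 2 ≤ ⟪(P + c • 1) x, x⟫ := by
  rw [add_apply, inner_add_left, smul_apply, one_apply_eq_self, real_inner_smul_left,
    real_inner_self_eq_norm_sq]
  linarith [hP.inner_nonneg_left x]

lemma isUnit_add_smul_one [CompleteSpace E] {P : E →L[ℝ] E} (hP : P.IsPositive) {c : ℝ}
    (hc : 0 < c) : IsUnit (P + c • 1) :=
  isUnit_of_forall_mul_norm_sq_le_inner hc (hP.mul_norm_sq_le_inner_add_smul_one c)

lemma ringInverse {A : E →L[ℝ] E} (hA : A.IsPositive) : (Ring.inverse A).IsPositive := by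
  by_cases hu : IsUnit A
  · have hAB := apply_ringInverse_apply hu
    refine (isPositive_iff _).2 ⟨fun u v => ?_, fun u => ?_⟩
    · change ⟪Ring.inverse A u, v⟫ = ⟪u, Ring.inverse A v⟫
      conv_lhs => rw [← hAB v]
      rw [← hA.inner_left_eq_inner_right, hAB]
    · simpa only [hAB, real_inner_comm] using hA.inner_nonneg_left (Ring.inverse A u)
  · rw [Ring.inverse_non_unit A hu]
    exact isPositive_zero

lemma inner_sub_apply_le {B : F →L[ℝ] F} (hB : B.IsPositive) (y z : F) :
    ⟪B (z - y), y⟫ ≤ ⟪B z, z⟫ / 4 := by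
  have h := hB.inner_nonneg_left (z - (2 : ℝ) • y)
  have hsymm : ⟪B y, z⟫ = ⟪B z, y⟫ :=
    (hB.inner_left_eq_inner_right y z).trans (real_inner_comm _ _)
  simp only [map_sub, map_smul, inner_sub_left, inner_sub_right, real_inner_smul_left,
    real_inner_smul_right] at h ⊢
  linarith

lemma mul_norm_sq_le_of_adjoint_conj_add_smul_one_apply_eq [CompleteSpace E] [CompleteSpace F]
    {B : F →L[ℝ] F} (hB : B.IsPositive) (S : E →L[ℝ] F) (c : ℝ) {x : E} {z : F}
    (hx : (adjoint S ∘L B ∘L S + c • 1) x = adjoint S (B z)) :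
    c * ‖x‖ ^ 2 ≤ ⟪B z, z⟫ / 4 := by
  have h := congrArg (⟪·, x⟫) hx
  simp only [add_apply, comp_apply, smul_apply, one_apply_eq_self, inner_add_left,
    adjoint_inner_left, real_inner_smul_left, real_inner_self_eq_norm_sq] at h
  have := hB.inner_sub_apply_le (S x) z
  rw [map_sub, inner_sub_left] at this
  linarith

end IsPositive

end ContinuousLinearMap

/-- **Bound on the preconditioned inverse.**
Let `H_x, H_z` be real Hilbert spaces, `S : H_x → H_z` bounded, `S_z` a bounded
positive self-adjoint operator on `H_z`, and `μ, λ > 0`.  With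
`T_{μ,λ} := S*(S_z + μI)⁻¹S + λI` on `H_x`, the operator `T_{μ,λ}` is boundedly
invertible and `‖T_{μ,λ}⁻¹ S* (S_z + μI)⁻¹‖ ≤ 1/(2√(λμ))`. -/
theorem preconditioned_inverse_bound
    {Hx Hz : Type*} [NormedAddCommGroup Hx] [InnerProductSpace ℝ Hx] [CompleteSpace Hx]
    [NormedAddCommGroup Hz] [InnerProductSpace ℝ Hz] [CompleteSpace Hz]
    (S : Hx →L[ℝ] Hz) (Sz : Hz →L[ℝ] Hz) (hSz : Sz.IsPositive)
    (μ lam : ℝ) (hμ : 0 < μ) (hlam : 0 < lam) :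
    IsUnit (ContinuousLinearMap.adjoint S ∘L
        Ring.inverse (Sz + μ • (1 : Hz →L[ℝ] Hz)) ∘L S + lam • (1 : Hx →L[ℝ] Hx)) ∧
    ‖Ring.inverse (ContinuousLinearMap.adjoint S ∘L
          Ring.inverse (Sz + μ • (1 : Hz →L[ℝ] Hz)) ∘L S + lam • (1 : Hx →L[ℝ] Hx)) ∘L
        ContinuousLinearMap.adjoint S ∘L
        Ring.inverse (Sz + μ • (1 : Hz →L[ℝ] Hz))‖
      ≤ 1 / (2 * Real.sqrt (lam * μ)) := by
  set B := Ring.inverse (Sz + μ • (1 : Hz →L[ℝ] Hz))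
  have hB : B.IsPositive := (hSz.add (isPositive_one.smul_of_nonneg hμ.le)).ringInverse
  have hT := (hB.adjoint_conj S).isUnit_add_smul_one hlam
  refine ⟨hT, opNorm_le_bound _ (by positivity) fun z => ?_⟩
  set x := Ring.inverse (adjoint S ∘L B ∘L S + lam • 1) (adjoint S (B z))
  have hx_energy : lam * ‖x‖ ^ 2 ≤ ⟪B z, z⟫ / 4 :=
    hB.mul_norm_sq_le_of_adjoint_conj_add_smul_one_apply_eq S lam (apply_ringInverse_apply hT _)
  have hz_energy : ⟪B z, z⟫ ≤ ‖z‖ ^ 2 / μ :=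
    inner_ringInverse_apply_le_of_forall_mul_norm_sq_le_inner hμ
      (hSz.mul_norm_sq_le_inner_add_smul_one μ) z
  have hsqrt : Real.sqrt (lam * μ) ^ 2 = lam * μ := Real.sq_sqrt (by positivity)
  rw [comp_apply, comp_apply, ← pow_le_pow_iff_left₀ (norm_nonneg x) (by positivity) two_ne_zero]
  calc ‖x‖ ^ 2 ≤ ‖z‖ ^ 2 / (4 * (lam * μ)) := by
        rw [le_div_iff₀ (by positivity)]
        rw [le_div_iff₀ hμ] at hz_energy
        nlinarith
    _ = (1 / (2 * Real.sqrt (lam * μ)) * ‖z‖) ^ 2 := by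
        rw [mul_pow, div_pow, mul_pow, hsqrt]
        ring
end

section
/- Let H be a real Hilbert space, let T and T_μ be bounded positive self-adjoint operators on H, let λ > 0, and let h₀ ∈ H. Suppose ‖(T + λI)⁻¹ (T_μ − T)‖ ≤ δ for some δ < 1. Then ‖h₀ − (T_μ + λI)⁻¹ T_μ h₀‖ ≤ (1/(1 − δ)) · ‖h₀ − (T + λI)⁻¹ T h₀‖. -/
open ContinuousLinearMap

lemma pos_add_isUnit {H : Type*} [NormedAddCommGroup H] [InnerProductSpace ℝ H] [CompleteSpace H]
    (P : H →L[ℝ] H) (hP : P.IsPositive) {lam : ℝ} (hlam : 0 < lam) :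
    IsUnit (P + lam • (1 : H →L[ℝ] H)) := by
  apply isUnit_of_forall_le_norm_inner_map _ (c := lam.toNNReal) (by simpa using hlam)
  intro x
  have h1 : inner ℝ ((P + lam • (1 : H →L[ℝ] H)) x) x = inner ℝ (P x) x + lam * ‖x‖ ^ 2 := by
    simp [ContinuousLinearMap.add_apply, inner_add_left, real_inner_smul_left,
      real_inner_self_eq_norm_sq]
  have h2 : (0:ℝ) ≤ inner ℝ (P x) x := hP.inner_nonneg_left x
  rw [h1, Real.norm_eq_abs, Real.coe_toNNReal _ hlam.le]
  calc ‖x‖ ^ 2 * lam ≤ inner ℝ (P x) x + lam * ‖x‖ ^ 2 := by nlinarith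
  _ ≤ |inner ℝ (P x) x + lam * ‖x‖ ^ 2| := le_abs_self _

lemma resolvent_identity {H : Type*} [NormedAddCommGroup H] [InnerProductSpace ℝ H]
    [CompleteSpace H] (P : H →L[ℝ] H) (lam : ℝ)
    (hU : IsUnit (P + lam • (1 : H →L[ℝ] H))) (h₀ : H) :
    h₀ - Ring.inverse (P + lam • (1 : H →L[ℝ] H)) (P h₀) =
      lam • (Ring.inverse (P + lam • (1 : H →L[ℝ] H)) h₀) := by
  set B := P + lam • (1 : H →L[ℝ] H) with hB_def
  have h1 : Ring.inverse B (B h₀) = h₀ := by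
    rw [← ContinuousLinearMap.comp_apply, ← ContinuousLinearMap.mul_def,
      Ring.inverse_mul_cancel B hU, ContinuousLinearMap.one_apply]
  have h2 : B h₀ = P h₀ + lam • h₀ := by simp [hB_def]
  calc h₀ - Ring.inverse B (P h₀)
      = Ring.inverse B (B h₀) - Ring.inverse B (P h₀) := by rw [h1]
  _ = Ring.inverse B (B h₀ - P h₀) := (map_sub _ _ _).symm
  _ = Ring.inverse B (lam • h₀) := by rw [h2]; congr 1; abel
  _ = lam • Ring.inverse B h₀ := map_smul _ _ _

/-- **Bias upper bound (core estimate).**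
Let `H` be a real Hilbert space, `T, T_μ` bounded positive self-adjoint operators
on `H`, `λ > 0`, and `h₀ ∈ H`.  If `‖(T + λI)⁻¹ (T_μ − T)‖ ≤ δ` with `δ < 1`, then
`‖h₀ − (T_μ + λI)⁻¹ T_μ h₀‖ ≤ (1/(1 − δ)) ‖h₀ − (T + λI)⁻¹ T h₀‖`. -/
theorem bias_upper_bound_core
    {H : Type*} [NormedAddCommGroup H] [InnerProductSpace ℝ H] [CompleteSpace H]
    (T Tμ : H →L[ℝ] H) (hT : T.IsPositive) (hTμ : Tμ.IsPositive)
    (lam : ℝ) (hlam : 0 < lam) (h₀ : H) (δ : ℝ)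
    (hδ : ‖Ring.inverse (T + lam • (1 : H →L[ℝ] H)) ∘L (Tμ - T)‖ ≤ δ)
    (hδ1 : δ < 1) :
    ‖h₀ - Ring.inverse (Tμ + lam • (1 : H →L[ℝ] H)) (Tμ h₀)‖ ≤
      (1 / (1 - δ)) * ‖h₀ - Ring.inverse (T + lam • (1 : H →L[ℝ] H)) (T h₀)‖ := by
  set A := T + lam • (1 : H →L[ℝ] H) with hA_def
  set B := Tμ + lam • (1 : H →L[ℝ] H) with hB_def
  have hA : IsUnit A := pos_add_isUnit T hT hlam
  have hB : IsUnit B := pos_add_isUnit Tμ hTμ hlam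
  set D : H →L[ℝ] H := Ring.inverse A ∘L (Tμ - T) with hD_def
  have hδ0 : (0:ℝ) ≤ δ := le_trans (norm_nonneg _) hδ
  have hDnorm : ‖-D‖ < 1 := by rw [norm_neg]; exact lt_of_le_of_lt hδ hδ1
  set u1 : (H →L[ℝ] H)ˣ := Units.oneSub (-D) hDnorm with hu1
  have hABD : B = ↑(hA.unit * u1) := by
    have h1 : A * D = Tμ - T := by
      rw [hD_def, ← ContinuousLinearMap.mul_def, ← mul_assoc,
        Ring.mul_inverse_cancel A hA, one_mul]
    rw [Units.val_mul, IsUnit.unit_spec, hu1, Units.val_oneSub, sub_neg_eq_add,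
      mul_add, mul_one, h1, hA_def, hB_def]
    abel
  have hBinv : Ring.inverse B = (↑u1⁻¹ : H →L[ℝ] H) * ↑hA.unit⁻¹ := by
    rw [hABD, Ring.inverse_unit, mul_inv_rev, Units.val_mul]
  have hAinv : (↑hA.unit⁻¹ : H →L[ℝ] H) = Ring.inverse A := by
    rw [← Ring.inverse_unit, IsUnit.unit_spec]
  -- norm bound on the inverse of 1 + D
  have hone : ‖(1 : H →L[ℝ] H)‖ ≤ 1 := norm_id_le
  have hu1inv : ‖(↑u1⁻¹ : H →L[ℝ] H)‖ ≤ 1 / (1 - δ) := by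
    have hval : (↑u1⁻¹ : H →L[ℝ] H) = ∑' n : ℕ, (-D) ^ n := rfl
    have h1 : ‖∑' n : ℕ, (-D) ^ n‖ ≤ ‖(1 : H →L[ℝ] H)‖ - 1 + (1 - ‖-D‖)⁻¹ :=
      tsum_geometric_le_of_norm_lt_one (-D) hDnorm
    have h2 : (1 - ‖-D‖)⁻¹ ≤ (1 - δ)⁻¹ := by
      apply inv_anti₀ (by linarith)
      rw [norm_neg]; linarith [hδ]
    rw [hval, one_div]
    linarith
  have keyB := resolvent_identity Tμ lam hB h₀
  have keyA := resolvent_identity T lam hA h₀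
  rw [← hB_def] at keyB
  rw [← hA_def] at keyA
  rw [keyA, keyB, norm_smul, norm_smul, Real.norm_eq_abs, abs_of_pos hlam]
  have hbound : ‖Ring.inverse B h₀‖ ≤ (1 / (1 - δ)) * ‖Ring.inverse A h₀‖ := by
    rw [hBinv]
    calc ‖((↑u1⁻¹ : H →L[ℝ] H) * ↑hA.unit⁻¹) h₀‖
        = ‖(↑u1⁻¹ : H →L[ℝ] H) ((↑hA.unit⁻¹ : H →L[ℝ] H) h₀)‖ := rfl
    _ ≤ ‖(↑u1⁻¹ : H →L[ℝ] H)‖ * ‖(↑hA.unit⁻¹ : H →L[ℝ] H) h₀‖ := le_opNorm _ _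
    _ ≤ (1 / (1 - δ)) * ‖Ring.inverse A h₀‖ := by
        rw [hAinv]
        exact mul_le_mul_of_nonneg_right hu1inv (norm_nonneg _)
  have h1δ : 0 < 1 / (1 - δ) := by rw [one_div]; exact inv_pos.mpr (by linarith)
  calc lam * ‖Ring.inverse B h₀‖ ≤ lam * ((1 / (1 - δ)) * ‖Ring.inverse A h₀‖) :=
        mul_le_mul_of_nonneg_left hbound hlam.le
  _ = (1 / (1 - δ)) * (lam * ‖Ring.inverse A h₀‖) := by ring
end

section
/- Let H be a real Hilbert space, let Ŝ_z and S_z be bounded positive self-adjoint operators on H, and let μ > 0. If ‖(S_z + μI)⁻¹ (Ŝ_z − S_z)‖ ≤ δ_z for some δ_z ≤ 1/2, then ‖(Ŝ_z + μI)⁻¹ − (S_z + μI)⁻¹‖ ≤ δ_z (1 + 2δ_z)/μ. -/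
open ContinuousLinearMap
open scoped InnerProductSpace

lemma pos_unit {H : Type*} [NormedAddCommGroup H] [InnerProductSpace ℝ H] [CompleteSpace H]
    (P : H →L[ℝ] H) (hP : P.IsPositive) {μ : ℝ} (hμ : 0 < μ) :
    IsUnit (P + μ • (1 : H →L[ℝ] H)) ∧
      ‖Ring.inverse (P + μ • (1 : H →L[ℝ] H))‖ ≤ 1 / μ := by
  set A := P + μ • (1 : H →L[ℝ] H) with hAdef
  have key : ∀ x : H, ‖x‖ ^ 2 * (⟨μ, hμ.le⟩ : NNReal) ≤ ‖⟪A x, x⟫_ℝ‖ := by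
    intro x
    have h1 : (0 : ℝ) ≤ ⟪P x, x⟫_ℝ := hP.inner_nonneg_left x
    have h2 : ⟪A x, x⟫_ℝ = ⟪P x, x⟫_ℝ + μ * ‖x‖ ^ 2 := by
      simp [hAdef, add_apply, smul_apply, one_apply, inner_add_left, real_inner_smul_left,
        real_inner_self_eq_norm_sq]
    have : ‖x‖ ^ 2 * μ ≤ ⟪A x, x⟫_ℝ := by rw [h2]; nlinarith
    calc (‖x‖ ^ 2 * (⟨μ, hμ.le⟩ : NNReal) : ℝ) = ‖x‖ ^ 2 * μ := rfl
      _ ≤ ⟪A x, x⟫_ℝ := this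
      _ ≤ ‖⟪A x, x⟫_ℝ‖ := le_abs_self _
  have hc : (0 : NNReal) < ⟨μ, hμ.le⟩ := by exact_mod_cast hμ
  have hU : IsUnit A := isUnit_of_forall_le_norm_inner_map A hc key
  refine ⟨hU, ?_⟩
  have hanti := antilipschitz_of_forall_le_inner_map A hc key
  rw [← hU.unit_spec, Ring.inverse_unit]
  refine opNorm_le_bound _ (by positivity) fun y => ?_
  set B : H →L[ℝ] H := ↑hU.unit⁻¹ with hB
  have hAB : A (B y) = y := by
    have : (↑hU.unit * ↑hU.unit⁻¹ : H →L[ℝ] H) = 1 := by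
      rw [← Units.val_mul, mul_inv_cancel, Units.val_one]
    have h2 : A ∘L B = 1 := by
      exact this
    calc A (B y) = (A ∘L B) y := rfl
      _ = y := by rw [h2]; rfl
  have hb := A.bound_of_antilipschitz hanti (B y)
  rw [hAB] at hb
  calc ‖B y‖ ≤ (⟨μ, hμ.le⟩ : NNReal)⁻¹ * ‖y‖ := hb
    _ = 1 / μ * ‖y‖ := by
        congr 1
        simp

/-- **Inverse estimation error.**
Let `H` be a real Hilbert space, `Ŝ_z, S_z` bounded positive self-adjoint
operators on `H`, and `μ > 0`.  If `‖(S_z + μI)⁻¹ (Ŝ_z − S_z)‖ ≤ δ_z` with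
`δ_z ≤ 1/2`, then `‖(Ŝ_z + μI)⁻¹ − (S_z + μI)⁻¹‖ ≤ δ_z (1 + 2δ_z)/μ`. -/
theorem inverse_estimation_error
    {H : Type*} [NormedAddCommGroup H] [InnerProductSpace ℝ H] [CompleteSpace H]
    (Szhat Sz : H →L[ℝ] H) (hSzhat : Szhat.IsPositive) (hSz : Sz.IsPositive)
    (μ : ℝ) (hμ : 0 < μ) (δz : ℝ)
    (hδz : ‖Ring.inverse (Sz + μ • (1 : H →L[ℝ] H)) ∘L (Szhat - Sz)‖ ≤ δz)
    (hδz2 : δz ≤ 1 / 2) :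
    ‖Ring.inverse (Szhat + μ • (1 : H →L[ℝ] H)) -
        Ring.inverse (Sz + μ • (1 : H →L[ℝ] H))‖ ≤ δz * (1 + 2 * δz) / μ := by
  obtain ⟨hUA, hnA⟩ := pos_unit Sz hSz hμ
  obtain ⟨hUB, hnB⟩ := pos_unit Szhat hSzhat hμ
  set A := Sz + μ • (1 : H →L[ℝ] H) with hA
  set Bo := Szhat + μ • (1 : H →L[ℝ] H) with hBo
  set E := Szhat - Sz with hEd
  set iA := Ring.inverse A with hiA
  set iB := Ring.inverse Bo with hiB
  have hδ0 : 0 ≤ δz := le_trans (norm_nonneg _) hδz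
  have h1 : Bo * iB = 1 := Ring.mul_inverse_cancel _ hUB
  have h2 : iA * A = 1 := Ring.inverse_mul_cancel _ hUA
  have hE : E = Bo - A := by rw [hEd, hBo, hA]; abel
  have key1 : iA * E * iB = iA - iB := by
    have : iA * E * iB = iA * (Bo * iB) - iA * A * iB := by rw [hE]; noncomm_ring
    rw [this, h1, h2, mul_one, one_mul]
  have hEnorm : ‖iA * E‖ ≤ δz := hδz
  have h3 : ‖iB - iA‖ ≤ δz * ‖iB‖ := by
    have : iB - iA = -(iA * E * iB) := by rw [key1, neg_sub]
    rw [this, norm_neg]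
    calc ‖iA * E * iB‖ ≤ ‖iA * E‖ * ‖iB‖ := norm_mul_le _ _
      _ ≤ δz * ‖iB‖ := by
          exact mul_le_mul_of_nonneg_right hEnorm (norm_nonneg _)
  have h4 : ‖iB‖ ≤ 1 / μ + δz * ‖iB‖ := by
    have hid : iB = iA - iA * E * iB := by rw [key1, sub_sub_cancel]
    calc ‖iB‖ = ‖iA - iA * E * iB‖ := by rw [← hid]
      _ ≤ ‖iA‖ + ‖iA * E * iB‖ := norm_sub_le _ _
      _ ≤ 1 / μ + δz * ‖iB‖ := by
          refine add_le_add hnA ?_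
          calc ‖iA * E * iB‖ ≤ ‖iA * E‖ * ‖iB‖ := norm_mul_le _ _
            _ ≤ δz * ‖iB‖ := mul_le_mul_of_nonneg_right hEnorm (norm_nonneg _)
  rw [div_eq_mul_inv, ← div_eq_mul_inv, le_div_iff₀ hμ]
  have hb : ‖iB‖ * μ ≤ 1 + δz * (‖iB‖ * μ) := by
    have := mul_le_mul_of_nonneg_right h4 hμ.le
    calc ‖iB‖ * μ ≤ (1 / μ + δz * ‖iB‖) * μ := this
      _ = 1 + δz * (‖iB‖ * μ) := by field_simp
  nlinarith [h3, hb, norm_nonneg iB, norm_nonneg (iB - iA), mul_nonneg (norm_nonneg iB) hμ.le,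
    mul_le_mul_of_nonneg_right h3 hμ.le, sq_nonneg δz, mul_nonneg (mul_nonneg hδ0 hδ0) (by linarith : (0:ℝ) ≤ 1 - 2*δz)]
end

section
/- Let H_x and H_z be real Hilbert spaces, let S : H_x → H_z be a bounded operator, let S_z and Ŝ_z be bounded positive self-adjoint operators on H_z, and let μ, λ > 0. Define T_{μ,λ} := S*(S_z + μI)⁻¹S + λI on H_x. If ‖(S_z + μI)⁻¹ (Ŝ_z − S_z)‖ ≤ δ_z for some δ_z ≤ 1/2, then ‖T_{μ,λ}⁻¹ S* ((Ŝ_z + μI)⁻¹ − (S_z + μI)⁻¹)‖ ≤ δ_z (1 + 2δ_z)/(2√(λμ)). -/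
set_option maxHeartbeats 1000000
set_option synthInstance.maxHeartbeats 400000

open ContinuousLinearMap RealInnerProductSpace



section Aux
variable {H : Type*} [NormedAddCommGroup H] [InnerProductSpace ℝ H] [CompleteSpace H]
variable {H : Type*} [NormedAddCommGroup H] [InnerProductSpace ℝ H] [CompleteSpace H]

/-- coercivity of P + c•1 -/
lemma aux_coercive {P : H →L[ℝ] H} (hP : P.IsPositive) {c : ℝ} (hc : 0 < c) (x : H) :
    c * ‖x‖ ^ 2 ≤ ⟪(P + c • (1 : H →L[ℝ] H)) x, x⟫ := by
  have h1 : 0 ≤ ⟪P x, x⟫ := by simpa [ContinuousLinearMap.reApplyInnerSelf] using hP.2 x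
  have : ⟪(P + c • (1 : H →L[ℝ] H)) x, x⟫ = ⟪P x, x⟫ + c * ⟪x, x⟫ := by
    simp [inner_add_left, inner_smul_left, real_inner_smul_left]
  rw [this, real_inner_self_eq_norm_sq]
  nlinarith

lemma aux_isUnit {P : H →L[ℝ] H} (hP : P.IsPositive) {c : ℝ} (hc : 0 < c) :
    IsUnit (P + c • (1 : H →L[ℝ] H)) := by
  apply isUnit_of_forall_le_norm_inner_map _ (c := ⟨c, hc.le⟩) (by exact_mod_cast hc)
  intro x
  have := aux_coercive hP hc x
  calc ‖x‖ ^ 2 * (⟨c, hc.le⟩ : NNReal) = c * ‖x‖ ^ 2 := by push_cast; ring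
    _ ≤ ⟪(P + c • (1 : H →L[ℝ] H)) x, x⟫ := this
    _ ≤ ‖⟪(P + c • (1 : H →L[ℝ] H)) x, x⟫‖ := le_abs_self _

/-- Cauchy-Schwarz for a positive operator -/
lemma aux_cs {P : H →L[ℝ] H} (hP : P.IsPositive) (x y : H) :
    ⟪P x, y⟫ ^ 2 ≤ ⟪P x, x⟫ * ⟪P y, y⟫ := by
  have hsym := hP.isSelfAdjoint.isSymmetric
  have hq : ∀ t : ℝ, 0 ≤ ⟪P x, x⟫ * (t * t) + (2 * ⟪P x, y⟫) * t + ⟪P y, y⟫ := by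
    intro t
    have h0 : 0 ≤ ⟪P (t • x + y), t • x + y⟫ := by
      simpa [ContinuousLinearMap.reApplyInnerSelf] using hP.2 (t • x + y)
    have hyx : ⟪P y, x⟫ = ⟪P x, y⟫ :=
      (real_inner_comm _ _).trans (hsym x y).symm
    calc (0:ℝ) ≤ ⟪P (t • x + y), t • x + y⟫ := h0
      _ = ⟪P x, x⟫ * (t * t) + (2 * ⟪P x, y⟫) * t + ⟪P y, y⟫ := by
          simp [map_add, map_smul, inner_add_add_self, inner_add_left, inner_add_right,
            real_inner_smul_left, real_inner_smul_right, hyx]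
          ring
  have := discrim_le_zero hq
  rw [discrim] at this
  nlinarith


lemma aux_right_inv {B : H →L[ℝ] H} (hU : IsUnit B) (y : H) :
    B (Ring.inverse B y) = y := by
  have := Ring.mul_inverse_cancel B hU
  have := DFunLike.congr_fun this y
  simpa [ContinuousLinearMap.mul_def] using this

lemma aux_left_inv {B : H →L[ℝ] H} (hU : IsUnit B) (y : H) :
    Ring.inverse B (B y) = y := by
  have := Ring.inverse_mul_cancel B hU
  have := DFunLike.congr_fun this y
  simpa [ContinuousLinearMap.mul_def] using this

lemma aux_sa_shift {P : H →L[ℝ] H} (hP : P.IsPositive) (c : ℝ) :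
    IsSelfAdjoint (P + c • (1 : H →L[ℝ] H)) :=
  by
  have h1 : IsSelfAdjoint (c • (1 : H →L[ℝ] H)) := by
    rw [IsSelfAdjoint, star_smul, star_one, star_trivial]
  exact hP.isSelfAdjoint.add h1

lemma aux_inv_sa {B : H →L[ℝ] H} (hB : IsSelfAdjoint B) :
    IsSelfAdjoint (Ring.inverse B) := by
  have := Ring.inverse_star B
  rw [hB.star_eq] at this
  exact this.symm

lemma aux_inv_pos {P : H →L[ℝ] H} (hP : P.IsPositive) {c : ℝ} (hc : 0 < c) :
    (Ring.inverse (P + c • (1 : H →L[ℝ] H))).IsPositive := by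
  set B := P + c • (1 : H →L[ℝ] H) with hBdef
  have hU := aux_isUnit hP hc
  refine ⟨(aux_inv_sa (aux_sa_shift hP c)).isSymmetric, fun y => ?_⟩
  have h1 : ⟪B (Ring.inverse B y), Ring.inverse B y⟫ =
      ⟪Ring.inverse B y, y⟫ := by
    rw [aux_right_inv hU y, real_inner_comm]
  have h2 := aux_coercive hP hc (Ring.inverse B y)
  simp only [ContinuousLinearMap.reApplyInnerSelf]
  have : (0:ℝ) ≤ ⟪Ring.inverse B y, y⟫ := by
    rw [← h1]; exact le_trans (by positivity) h2
  simpa using this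

lemma aux_inv_bound {P : H →L[ℝ] H} (hP : P.IsPositive) {c : ℝ} (hc : 0 < c) (y : H) :
    ⟪Ring.inverse (P + c • (1 : H →L[ℝ] H)) y, y⟫ ≤ ‖y‖ ^ 2 / c := by
  set B := P + c • (1 : H →L[ℝ] H) with hBdef
  have hU := aux_isUnit hP hc
  set v := Ring.inverse B y with hv
  have hBv : B v = y := aux_right_inv hU y
  have h2 : c * ‖v‖ ^ 2 ≤ ⟪B v, v⟫ := aux_coercive hP hc v
  have h3 : ⟪B v, v⟫ ≤ ‖y‖ * ‖v‖ := by
    rw [hBv]; exact real_inner_le_norm y v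
  have h4 : c * ‖v‖ ≤ ‖y‖ := by
    rcases eq_or_lt_of_le (norm_nonneg v) with h | h
    · rw [← h]; simpa using norm_nonneg y
    · nlinarith
  have h5 : ⟪v, y⟫ ≤ ‖v‖ * ‖y‖ := real_inner_le_norm v y
  have : ⟪v, y⟫ ≤ ‖y‖ ^ 2 / c := by
    rw [le_div_iff₀ hc]
    nlinarith [norm_nonneg y, norm_nonneg v]
  exact this
end Aux


section Key
variable {Hx Hz : Type*} [NormedAddCommGroup Hx] [InnerProductSpace ℝ Hx] [CompleteSpace Hx]
  [NormedAddCommGroup Hz] [InnerProductSpace ℝ Hz] [CompleteSpace Hz]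

lemma aux_key (S : Hx →L[ℝ] Hz) {R : Hz →L[ℝ] Hz} (hR : R.IsPositive)
    {μ lam : ℝ} (hμ : 0 < μ) (hlam : 0 < lam)
    (hRbd : ∀ y, ⟪R y, y⟫ ≤ ‖y‖ ^ 2 / μ)
    (hTU : IsUnit (ContinuousLinearMap.adjoint S ∘L R ∘L S + lam • (1 : Hx →L[ℝ] Hx)))
    (y : Hz) :
    ‖Ring.inverse (ContinuousLinearMap.adjoint S ∘L R ∘L S + lam • (1 : Hx →L[ℝ] Hx))
        (ContinuousLinearMap.adjoint S (R y))‖ ≤ ‖y‖ / (2 * Real.sqrt (lam * μ)) := by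
  set T := ContinuousLinearMap.adjoint S ∘L R ∘L S + lam • (1 : Hx →L[ℝ] Hx) with hTdef
  set u := Ring.inverse T (ContinuousLinearMap.adjoint S (R y)) with hu
  have hTu : T u = ContinuousLinearMap.adjoint S (R y) := aux_right_inv hTU _
  have h1 : ⟪T u, u⟫ = ⟪R (S u), S u⟫ + lam * ‖u‖ ^ 2 := by
    rw [hTdef]
    simp only [ContinuousLinearMap.add_apply, ContinuousLinearMap.comp_apply,
      ContinuousLinearMap.smul_apply, ContinuousLinearMap.one_apply, inner_add_left,
      real_inner_smul_left]
    rw [ContinuousLinearMap.adjoint_inner_left, real_inner_self_eq_norm_sq]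
  have h2 : ⟪T u, u⟫ = ⟪R y, S u⟫ := by
    rw [hTu, ContinuousLinearMap.adjoint_inner_left]
  have hCS : ⟪R y, S u⟫ ^ 2 ≤ ⟪R y, y⟫ * ⟪R (S u), S u⟫ := aux_cs hR y (S u)
  have hRy0 : (0:ℝ) ≤ ⟪R y, y⟫ := by
    simpa [ContinuousLinearMap.reApplyInnerSelf] using hR.2 y
  have hRSu0 : (0:ℝ) ≤ ⟪R (S u), S u⟫ := by
    simpa [ContinuousLinearMap.reApplyInnerSelf] using hR.2 (S u)
  set a := Real.sqrt ⟪R (S u), S u⟫ with hadef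
  set s := Real.sqrt ⟪R y, y⟫ with hsdef
  have ha : a ^ 2 = ⟪R (S u), S u⟫ := Real.sq_sqrt hRSu0
  have hs : s ^ 2 = ⟪R y, y⟫ := Real.sq_sqrt hRy0
  have ha0 : 0 ≤ a := Real.sqrt_nonneg _
  have hs0 : 0 ≤ s := Real.sqrt_nonneg _
  have hsy : s ^ 2 ≤ ‖y‖ ^ 2 / μ := by rw [hs]; exact hRbd y
  have hinner : ⟪R y, S u⟫ ≤ s * a := by
    nlinarith [hCS, mul_nonneg hs0 ha0, sq_nonneg (s * a - ⟪R y, S u⟫),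
      sq_nonneg (s * a + ⟪R y, S u⟫)]
  have hmain : a ^ 2 + lam * ‖u‖ ^ 2 ≤ s * a := by
    rw [ha]; nlinarith [h1, h2, hinner]
  have hu2 : lam * ‖u‖ ^ 2 ≤ ‖y‖ ^ 2 / (4 * μ) := by
    have h4 : lam * ‖u‖ ^ 2 ≤ s ^ 2 / 4 := by nlinarith [sq_nonneg (a - s / 2)]
    have hsy' : s ^ 2 * μ ≤ ‖y‖ ^ 2 := (le_div_iff₀ hμ).mp hsy
    rw [le_div_iff₀ (by positivity)]
    nlinarith [hsy', hμ, hlam, sq_nonneg s]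
  have hrpos : 0 < 2 * Real.sqrt (lam * μ) := by positivity
  have hsq : ‖u‖ ^ 2 ≤ (‖y‖ / (2 * Real.sqrt (lam * μ))) ^ 2 := by
    have hsqrt : Real.sqrt (lam * μ) ^ 2 = lam * μ := Real.sq_sqrt (by positivity)
    have h5 : lam * ‖u‖ ^ 2 * (4 * μ) ≤ ‖y‖ ^ 2 := (le_div_iff₀ (by positivity)).mp hu2
    rw [div_pow, mul_pow, hsqrt, le_div_iff₀ (by positivity)]
    nlinarith [h5, hlam, hμ, norm_nonneg u]
  calc ‖u‖ = Real.sqrt (‖u‖ ^ 2) := (Real.sqrt_sq (norm_nonneg u)).symm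
    _ ≤ Real.sqrt ((‖y‖ / (2 * Real.sqrt (lam * μ))) ^ 2) := Real.sqrt_le_sqrt hsq
    _ = ‖y‖ / (2 * Real.sqrt (lam * μ)) := Real.sqrt_sq (by positivity)
end Key


/-- **Projected inverse estimation error.**
Let `H_x, H_z` be real Hilbert spaces, `S : H_x → H_z` bounded, `S_z, Ŝ_z`
bounded positive self-adjoint operators on `H_z`, and `μ, λ > 0`.  With
`T_{μ,λ} := S*(S_z + μI)⁻¹S + λI`, if `‖(S_z + μI)⁻¹ (Ŝ_z − S_z)‖ ≤ δ_z` with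
`δ_z ≤ 1/2`, then
`‖T_{μ,λ}⁻¹ S* ((Ŝ_z + μI)⁻¹ − (S_z + μI)⁻¹)‖ ≤ δ_z (1 + 2δ_z)/(2√(λμ))`. -/
theorem projected_inverse_estimation_error
    {Hx Hz : Type*} [NormedAddCommGroup Hx] [InnerProductSpace ℝ Hx] [CompleteSpace Hx]
    [NormedAddCommGroup Hz] [InnerProductSpace ℝ Hz] [CompleteSpace Hz]
    (S : Hx →L[ℝ] Hz) (Sz Szhat : Hz →L[ℝ] Hz)
    (hSz : Sz.IsPositive) (hSzhat : Szhat.IsPositive)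
    (μ lam : ℝ) (hμ : 0 < μ) (hlam : 0 < lam) (δz : ℝ)
    (hδz : ‖Ring.inverse (Sz + μ • (1 : Hz →L[ℝ] Hz)) ∘L (Szhat - Sz)‖ ≤ δz)
    (hδz2 : δz ≤ 1 / 2) :
    ‖Ring.inverse (ContinuousLinearMap.adjoint S ∘L
          Ring.inverse (Sz + μ • (1 : Hz →L[ℝ] Hz)) ∘L S + lam • (1 : Hx →L[ℝ] Hx)) ∘L
        ContinuousLinearMap.adjoint S ∘L
        (Ring.inverse (Szhat + μ • (1 : Hz →L[ℝ] Hz)) -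
          Ring.inverse (Sz + μ • (1 : Hz →L[ℝ] Hz)))‖
      ≤ δz * (1 + 2 * δz) / (2 * Real.sqrt (lam * μ)) := by
  set B : Hz →L[ℝ] Hz := Sz + μ • (1 : Hz →L[ℝ] Hz) with hBdef
  set Bh : Hz →L[ℝ] Hz := Szhat + μ • (1 : Hz →L[ℝ] Hz) with hBhdef
  have hUz : IsUnit B := aux_isUnit hSz hμ
  have hUzh : IsUnit Bh := aux_isUnit hSzhat hμ
  set R : Hz →L[ℝ] Hz := Ring.inverse B with hRdef
  set Rh : Hz →L[ℝ] Hz := Ring.inverse Bh with hRhdef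
  set D : Hz →L[ℝ] Hz := Szhat - Sz with hDdef
  have hRpos : R.IsPositive := aux_inv_pos hSz hμ
  have hApos : (ContinuousLinearMap.adjoint S ∘L R ∘L S).IsPositive :=
    hRpos.adjoint_conj S
  set T : Hx →L[ℝ] Hx :=
    ContinuousLinearMap.adjoint S ∘L R ∘L S + lam • (1 : Hx →L[ℝ] Hx) with hTdef
  have hTU : IsUnit T := aux_isUnit hApos hlam
  -- algebraic identity : R = Rh + R * (D * Rh)
  have hinv1 : Bh * Rh = 1 := Ring.mul_inverse_cancel _ hUzh
  have hinv2 : R * B = 1 := Ring.inverse_mul_cancel _ hUz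
  have hsplit : Bh = B + D := by rw [hBdef, hBhdef, hDdef]; abel
  have hR_eq : R = Rh + R * (D * Rh) := by
    have e1 : R * (Bh * Rh) = R := by rw [hinv1, mul_one]
    have e2 : R * (Bh * Rh) = R * (B * Rh) + R * (D * Rh) := by
      rw [hsplit, add_mul, mul_add]
    have e3 : R * (B * Rh) = Rh := by rw [← mul_assoc, hinv2, one_mul]
    rw [e2, e3] at e1
    exact e1.symm
  have hiden : Rh - R = -(R * (D * Rh)) := by
    conv_lhs => rw [hR_eq]
    abel
  -- bound on ‖D * R‖ via adjoints
  have hRsa : IsSelfAdjoint R := aux_inv_sa (aux_sa_shift hSz μ)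
  have hDsa : IsSelfAdjoint D := hSzhat.isSelfAdjoint.sub hSz.isSelfAdjoint
  have hDR : ‖D * R‖ ≤ δz := by
    have hadj : ContinuousLinearMap.adjoint (R ∘L D) = D ∘L R := by
      rw [ContinuousLinearMap.adjoint_comp, hDsa.adjoint_eq, hRsa.adjoint_eq]
    have h2 : ‖R ∘L D‖ ≤ δz := hδz
    calc ‖D * R‖ = ‖D ∘L R‖ := by rw [ContinuousLinearMap.mul_def]
      _ = ‖ContinuousLinearMap.adjoint (R ∘L D)‖ := by rw [hadj]
      _ = ‖R ∘L D‖ := LinearIsometryEquiv.norm_map _ _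
      _ ≤ δz := h2
  have hδ0 : 0 ≤ δz := le_trans (norm_nonneg _) hδz
  -- bound on K := D * Rh
  set K : Hz →L[ℝ] Hz := D * Rh with hKdef
  have hK_eq : K = D * R - D * R * K := by
    rw [hKdef]
    calc D * Rh = D * (Rh + R * (D * Rh)) - D * (R * (D * Rh)) := by
          rw [mul_add]; abel
      _ = D * R - D * R * (D * Rh) := by rw [← hR_eq, mul_assoc]
  have hKnorm : ‖K‖ ≤ δz + δz * ‖K‖ := by
    calc ‖K‖ = ‖D * R - D * R * K‖ := by rw [← hK_eq]
      _ ≤ ‖D * R‖ + ‖D * R * K‖ := norm_sub_le _ _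
      _ ≤ ‖D * R‖ + ‖D * R‖ * ‖K‖ := by
          gcongr
          exact norm_mul_le _ _
      _ ≤ δz + δz * ‖K‖ := by gcongr
  have hKbd : ‖K‖ ≤ δz * (1 + 2 * δz) := by
    nlinarith [hKnorm, norm_nonneg K, sq_nonneg δz, hδ0, hδz2]
  -- norm bound on F := Ring.inverse T ∘L adjoint S ∘L R
  have hRbd : ∀ y, ⟪R y, y⟫ ≤ ‖y‖ ^ 2 / μ := fun y => aux_inv_bound hSz hμ y
  have hF : ‖(Ring.inverse T ∘L ContinuousLinearMap.adjoint S) ∘L R‖ ≤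
      1 / (2 * Real.sqrt (lam * μ)) := by
    apply ContinuousLinearMap.opNorm_le_bound _ (by positivity)
    intro y
    have := aux_key S hRpos hμ hlam hRbd hTU y
    calc ‖((Ring.inverse T ∘L ContinuousLinearMap.adjoint S) ∘L R) y‖
        = ‖Ring.inverse T (ContinuousLinearMap.adjoint S (R y))‖ := rfl
      _ ≤ ‖y‖ / (2 * Real.sqrt (lam * μ)) := this
      _ = 1 / (2 * Real.sqrt (lam * μ)) * ‖y‖ := by ring
  -- rewrite the goal operator
  have hGoalEq : Ring.inverse T ∘L ContinuousLinearMap.adjoint S ∘L (Rh - R) =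
      -(((Ring.inverse T ∘L ContinuousLinearMap.adjoint S) ∘L R) ∘L K) := by
    rw [hiden]
    simp only [ContinuousLinearMap.mul_def, ContinuousLinearMap.comp_neg,
      ContinuousLinearMap.neg_comp, ContinuousLinearMap.comp_assoc]
  rw [hGoalEq, norm_neg]
  calc ‖((Ring.inverse T ∘L ContinuousLinearMap.adjoint S) ∘L R) ∘L K‖
      ≤ ‖(Ring.inverse T ∘L ContinuousLinearMap.adjoint S) ∘L R‖ * ‖K‖ :=
        ContinuousLinearMap.opNorm_comp_le _ _
    _ ≤ 1 / (2 * Real.sqrt (lam * μ)) * (δz * (1 + 2 * δz)) := by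
        have h0 : (0:ℝ) ≤ 1 / (2 * Real.sqrt (lam * μ)) := by positivity
        exact mul_le_mul hF hKbd (norm_nonneg _) h0
    _ = δz * (1 + 2 * δz) / (2 * Real.sqrt (lam * μ)) := by ring
end

section
/- Let H be a real Hilbert space, let T_μ and T̂_μ be bounded positive self-adjoint operators on H, and let λ > 0. If ‖(T_μ + λI)⁻¹ (T̂_μ − T_μ)‖ ≤ δ for some δ ≤ 1/2, then ‖(T̂_μ + λI)⁻¹ (T̂_μ − T_μ)‖ ≤ 3δ. -/
open ContinuousLinearMap

lemma aux_isUnit_s18 {H : Type*} [NormedAddCommGroup H] [InnerProductSpace ℝ H] [CompleteSpace H]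
    (P : H →L[ℝ] H) (hP : P.IsPositive) (lam : ℝ) (hlam : 0 < lam) :
    IsUnit (P + lam • (1 : H →L[ℝ] H)) := by
  refine isUnit_of_forall_le_norm_inner_map _ (c := ⟨lam, hlam.le⟩) (by exact_mod_cast hlam) ?_
  intro x
  have h1 : (inner ℝ ((P + lam • (1 : H →L[ℝ] H)) x) (x) : ℝ) = (inner ℝ (P x) (x) : ℝ) + lam * ‖x‖ ^ 2 := by
    simp [inner_add_left, inner_smul_left, real_inner_self_eq_norm_sq]
  have h2 : (0:ℝ) ≤ (inner ℝ (P x) (x) : ℝ) := hP.inner_nonneg_left x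
  have h3 : ‖x‖ ^ 2 * lam ≤ (inner ℝ ((P + lam • (1 : H →L[ℝ] H)) x) (x) : ℝ) := by
    rw [h1]; nlinarith [sq_nonneg ‖x‖]
  calc ‖x‖ ^ 2 * (⟨lam, hlam.le⟩ : NNReal) = ‖x‖ ^ 2 * lam := rfl
    _ ≤ (inner ℝ ((P + lam • (1 : H →L[ℝ] H)) x) (x) : ℝ) := h3
    _ ≤ ‖(inner ℝ ((P + lam • (1 : H →L[ℝ] H)) x) (x) : ℝ)‖ := Real.le_norm_self _

/-- **Empirical operator deviation bound.**
Let `H` be a real Hilbert space, `T_μ, T̂_μ` bounded positive self-adjoint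
operators on `H`, and `λ > 0`.  If `‖(T_μ + λI)⁻¹ (T̂_μ − T_μ)‖ ≤ δ` with
`δ ≤ 1/2`, then `‖(T̂_μ + λI)⁻¹ (T̂_μ − T_μ)‖ ≤ 3δ`. -/
theorem empirical_operator_deviation_bound
    {H : Type*} [NormedAddCommGroup H] [InnerProductSpace ℝ H] [CompleteSpace H]
    (Tμ Tμhat : H →L[ℝ] H) (hTμ : Tμ.IsPositive) (hTμhat : Tμhat.IsPositive)
    (lam : ℝ) (hlam : 0 < lam) (δ : ℝ)
    (hδ : ‖Ring.inverse (Tμ + lam • (1 : H →L[ℝ] H)) ∘L (Tμhat - Tμ)‖ ≤ δ)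
    (hδ2 : δ ≤ 1 / 2) :
    ‖Ring.inverse (Tμhat + lam • (1 : H →L[ℝ] H)) ∘L (Tμhat - Tμ)‖ ≤ 3 * δ := by
  set A := Tμ + lam • (1 : H →L[ℝ] H) with hA
  set B := Tμhat + lam • (1 : H →L[ℝ] H) with hB
  set E := Tμhat - Tμ with hE
  have hUA : IsUnit A := aux_isUnit_s18 Tμ hTμ lam hlam
  have hUB : IsUnit B := aux_isUnit_s18 Tμhat hTμhat lam hlam
  have hBA : B - E = A := by rw [hA, hB, hE]; abel
  have key : Ring.inverse B * E = (1 - Ring.inverse B * E) * (Ring.inverse A * E) := by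
    have h1 : A * (Ring.inverse A * E) = E := by
      rw [← mul_assoc, Ring.mul_inverse_cancel _ hUA, one_mul]
    have h2 : Ring.inverse B * A = 1 - Ring.inverse B * E := by
      rw [← hBA, mul_sub, Ring.inverse_mul_cancel _ hUB]
    calc Ring.inverse B * E = Ring.inverse B * (A * (Ring.inverse A * E)) := by rw [h1]
      _ = (Ring.inverse B * A) * (Ring.inverse A * E) := by rw [mul_assoc]
      _ = (1 - Ring.inverse B * E) * (Ring.inverse A * E) := by rw [h2]
  have hδ0 : 0 ≤ δ := le_trans (norm_nonneg _) hδ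
  set x := ‖Ring.inverse B * E‖ with hx
  have hx0 : 0 ≤ x := norm_nonneg _
  have hbound : x ≤ (1 + x) * δ := by
    calc x = ‖(1 - Ring.inverse B * E) * (Ring.inverse A * E)‖ := by rw [hx]; exact congrArg norm key
      _ ≤ ‖1 - Ring.inverse B * E‖ * ‖Ring.inverse A * E‖ := norm_mul_le _ _
      _ ≤ (1 + x) * δ := by
          have h1 : ‖(1 : H →L[ℝ] H)‖ ≤ 1 := ContinuousLinearMap.norm_id_le
          have h2 : ‖1 - Ring.inverse B * E‖ ≤ 1 + x :=
            le_trans (norm_sub_le _ _) (by exact add_le_add_left h1 x)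
          exact mul_le_mul h2 hδ (norm_nonneg _) (by positivity)
  show x ≤ 3 * δ
  nlinarith
end
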